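/- arXiv:2107.02092 — 5 statements merged into one kernel-verified Lean document; each statement's English description precedes it below -/
import Mathlib

section
/- For all parameters α > 0, ζ > 0, δ > 0, γ ∈ ℝ and every natural number n, the n-th moment of the symmetric K-distribution equals μ_n = ∫_{-∞}^{∞} x^{n} f(x) dx = Σ_{k=0}^{n} [n! Γ(α + n - k) Γ(ζ + n - k) / (k! (n-k)! Γ(α) Γ(ζ))] · γ^{k} ((-1)^{n-k} + 1) / (2 δ^{n-k}), where f is the SKD density. -/
open Real MeasureTheory

/-- Density of the symmetric K-distribution (SKD): the continuous mixture of a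
reflected Gamma parental density over a Gamma prior. -/
noncomputable def skdDensity (α ζ δ γ : ℝ) (x : ℝ) : ℝ :=
  ∫ β in Set.Ioi (0 : ℝ),
    (|x - γ| ^ (α - 1) / (2 * β ^ α * Real.Gamma α)) * Real.exp (-|x - γ| / β) *
      ((δ ^ ζ * β ^ (ζ - 1) / Real.Gamma ζ) * Real.exp (-δ * β))

section SKDAux
open Set

-- integrability of Gamma-type integrand
lemma gammaIntOn {a r : ℝ} (ha : 0 < a) (hr : 0 < r) :
    IntegrableOn (fun t : ℝ => t ^ (a - 1) * Real.exp (-(r * t))) (Set.Ioi 0) := by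
  have h := integrableOn_rpow_mul_exp_neg_mul_rpow (p := 1) (s := a - 1) (b := r)
    (by linarith) zero_lt_one hr
  refine h.congr_fun (fun x hx => ?_) measurableSet_Ioi
  simp only [Real.rpow_one, neg_mul]

-- half-line: Ioi part with natural power
lemma halfline {α β : ℝ} (hα : 0 < α) (hβ : 0 < β) (m : ℕ) :
    IntegrableOn (fun y : ℝ => y ^ m * (|y| ^ (α - 1) * Real.exp (-|y| / β))) (Set.Ioi 0)
    ∧ ∫ y in Set.Ioi (0:ℝ), y ^ m * (|y| ^ (α - 1) * Real.exp (-|y| / β))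
        = β ^ (α + m) * Real.Gamma (α + m) := by
  have ham : (0:ℝ) < α + m := by positivity
  have hr : (0:ℝ) < 1 / β := by positivity
  have heq : Set.EqOn (fun y : ℝ => y ^ (α + (m:ℝ) - 1) * Real.exp (-((1/β) * y)))
      (fun y : ℝ => y ^ m * (|y| ^ (α - 1) * Real.exp (-|y| / β))) (Set.Ioi 0) := by
    intro y hy
    have hy0 : (0:ℝ) < y := hy
    simp only
    rw [abs_of_pos hy0, show α + (m:ℝ) - 1 = (m:ℝ) + (α - 1) by ring,
      Real.rpow_add hy0, Real.rpow_natCast]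
    rw [mul_assoc]
    congr 2
    rw [one_div, inv_mul_eq_div, neg_div]
  constructor
  · exact ((gammaIntOn ham hr).congr_fun heq measurableSet_Ioi)
  · rw [← setIntegral_congr_fun measurableSet_Ioi heq,
      integral_rpow_mul_exp_neg_mul_Ioi ham hr, one_div_one_div]

lemma fullline {α β : ℝ} (hα : 0 < α) (hβ : 0 < β) (m : ℕ) :
    Integrable (fun y : ℝ => y ^ m * (|y| ^ (α - 1) * Real.exp (-|y| / β)))
    ∧ ∫ y : ℝ, y ^ m * (|y| ^ (α - 1) * Real.exp (-|y| / β))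
        = ((-1:ℝ) ^ m + 1) * (β ^ (α + m) * Real.Gamma (α + m)) := by
  obtain ⟨hint, hval⟩ := halfline hα hβ m
  set f : ℝ → ℝ := fun y => y ^ m * (|y| ^ (α - 1) * Real.exp (-|y| / β)) with hf
  have hneg : ∀ x : ℝ, f (-x) = (-1:ℝ) ^ m * f x := by
    intro x
    show (-x) ^ m * (|(-x)| ^ (α - 1) * Real.exp (-|(-x)| / β)) = _
    rw [abs_neg, neg_pow]; ring
  have hIic : IntegrableOn f (Set.Iic 0) := by
    have A : MeasurableEmbedding fun x : ℝ => -x := (Homeomorph.neg ℝ).measurableEmbedding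
    rw [← Measure.map_neg_eq_self (volume : Measure ℝ), A.integrableOn_map_iff]
    simp_rw [Function.comp_def, hneg, neg_preimage, neg_Iic, neg_zero]
    exact (Iff.mpr integrableOn_Ici_iff_integrableOn_Ioi hint).const_mul _
  have hIicval : ∫ y in Set.Iic (0:ℝ), f y = (-1:ℝ) ^ m * (β ^ (α + m) * Real.Gamma (α + m)) := by
    have h0 := integral_comp_neg_Ioi (0:ℝ) f
    rw [neg_zero] at h0
    rw [← h0]
    simp_rw [hneg]
    rw [integral_const_mul, hval]
  constructor
  · rw [← integrableOn_univ, ← Set.Iic_union_Ioi (a := (0:ℝ))]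
    exact hIic.union hint
  · rw [← intervalIntegral.integral_Iic_add_Ioi hIic hint, hIicval, hval]; ring

lemma absline {α β : ℝ} (hα : 0 < α) (hβ : 0 < β) (m : ℕ) :
    Integrable (fun y : ℝ => |y| ^ m * (|y| ^ (α - 1) * Real.exp (-|y| / β)))
    ∧ ∫ y : ℝ, |y| ^ m * (|y| ^ (α - 1) * Real.exp (-|y| / β))
        = 2 * (β ^ (α + m) * Real.Gamma (α + m)) := by
  obtain ⟨hint0, hval0⟩ := halfline hα hβ m
  set f : ℝ → ℝ := fun y => |y| ^ m * (|y| ^ (α - 1) * Real.exp (-|y| / β)) with hf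
  have heqI : Set.EqOn (fun y : ℝ => y ^ m * (|y| ^ (α - 1) * Real.exp (-|y| / β))) f
      (Set.Ioi 0) := by
    intro y hy; simp only [hf, abs_of_pos (show (0:ℝ) < y from hy)]
  have hint : IntegrableOn f (Set.Ioi 0) := hint0.congr_fun heqI measurableSet_Ioi
  have hval : ∫ y in Set.Ioi (0:ℝ), f y = β ^ (α + m) * Real.Gamma (α + m) := by
    rw [← setIntegral_congr_fun measurableSet_Ioi heqI, hval0]
  have hneg : ∀ x : ℝ, f (-x) = f x := by
    intro x; simp only [hf, abs_neg]
  have hIic : IntegrableOn f (Set.Iic 0) := by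
    have A : MeasurableEmbedding fun x : ℝ => -x := (Homeomorph.neg ℝ).measurableEmbedding
    rw [← Measure.map_neg_eq_self (volume : Measure ℝ), A.integrableOn_map_iff]
    simp_rw [Function.comp_def, hneg, neg_preimage, neg_Iic, neg_zero]
    exact Iff.mpr integrableOn_Ici_iff_integrableOn_Ioi hint
  have hIicval : ∫ y in Set.Iic (0:ℝ), f y = β ^ (α + m) * Real.Gamma (α + m) := by
    have h0 := integral_comp_neg_Ioi (0:ℝ) f
    rw [neg_zero] at h0
    rw [← h0]
    simp_rw [hneg]
    exact hval
  constructor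
  · rw [← integrableOn_univ, ← Set.Iic_union_Ioi (a := (0:ℝ))]
    exact hIic.union hint
  · rw [← intervalIntegral.integral_Iic_add_Ioi hIic hint, hIicval, hval]; ring

lemma inner_int {α ζ δ γ β : ℝ} (hα : 0 < α) (hζ : 0 < ζ) (hδ : 0 < δ) (hβ : 0 < β) (n : ℕ) :
    Integrable (fun y : ℝ => (y + γ) ^ n *
      (|y| ^ (α - 1) / (2 * β ^ α * Real.Gamma α) * Real.exp (-|y| / β) *
        ((δ ^ ζ * β ^ (ζ - 1) / Real.Gamma ζ) * Real.exp (-δ * β))))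
    ∧ ∫ y : ℝ, (y + γ) ^ n *
      (|y| ^ (α - 1) / (2 * β ^ α * Real.Gamma α) * Real.exp (-|y| / β) *
        ((δ ^ ζ * β ^ (ζ - 1) / Real.Gamma ζ) * Real.exp (-δ * β)))
      = ∑ k ∈ Finset.range (n + 1),
          ((n.choose k : ℝ) * γ ^ k * ((-1:ℝ) ^ (n - k) + 1) * Real.Gamma (α + (n - k : ℕ)) *
            δ ^ ζ / (2 * Real.Gamma α * Real.Gamma ζ)) *
          (β ^ (ζ + (n - k : ℕ) - 1) * Real.exp (-(δ * β))) := by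
  set c := 1 / (2 * β ^ α * Real.Gamma α) *
      ((δ ^ ζ * β ^ (ζ - 1) / Real.Gamma ζ) * Real.exp (-δ * β)) with hc
  have key : ∀ y : ℝ, (y + γ) ^ n *
      (|y| ^ (α - 1) / (2 * β ^ α * Real.Gamma α) * Real.exp (-|y| / β) *
        ((δ ^ ζ * β ^ (ζ - 1) / Real.Gamma ζ) * Real.exp (-δ * β)))
      = ∑ k ∈ Finset.range (n + 1),
          (γ ^ k * (n.choose k : ℝ) * c) *
            (y ^ (n - k) * (|y| ^ (α - 1) * Real.exp (-|y| / β))) := by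
    intro y
    rw [show y + γ = γ + y by ring, add_pow, Finset.sum_mul]
    refine Finset.sum_congr rfl fun k hk => ?_
    rw [hc]; ring
  constructor
  · rw [show (fun y : ℝ => (y + γ) ^ n *
      (|y| ^ (α - 1) / (2 * β ^ α * Real.Gamma α) * Real.exp (-|y| / β) *
        ((δ ^ ζ * β ^ (ζ - 1) / Real.Gamma ζ) * Real.exp (-δ * β)))) = _ from funext key]
    exact integrable_finset_sum _ fun k _ => ((fullline hα hβ (n - k)).1.const_mul _)
  · simp_rw [key]
    rw [integral_finset_sum _ fun k _ => ((fullline hα hβ (n - k)).1.const_mul _)]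
    refine Finset.sum_congr rfl fun k hk => ?_
    rw [integral_const_mul, (fullline hα hβ (n - k)).2]
    have h1 : β ^ (α + ((n - k : ℕ) : ℝ)) = β ^ α * β ^ ((n - k : ℕ) : ℝ) :=
      Real.rpow_add hβ _ _
    have h2 : β ^ (ζ + ((n - k : ℕ) : ℝ) - 1) = β ^ (ζ - 1) * β ^ ((n - k : ℕ) : ℝ) := by
      rw [show ζ + ((n - k : ℕ) : ℝ) - 1 = (ζ - 1) + ((n - k : ℕ) : ℝ) by ring,
        Real.rpow_add hβ]
    rw [hc, h1, h2, neg_mul]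
    have hβα : β ^ α ≠ 0 := (Real.rpow_pos_of_pos hβ α).ne'
    have hΓα : Real.Gamma α ≠ 0 := (Real.Gamma_pos_of_pos hα).ne'
    have hΓζ : Real.Gamma ζ ≠ 0 := (Real.Gamma_pos_of_pos hζ).ne'
    field_simp

lemma inner_abs {α ζ δ γ β : ℝ} (hα : 0 < α) (hζ : 0 < ζ) (hδ : 0 < δ) (hβ : 0 < β) (n : ℕ) :
    ∫ y : ℝ, ‖(y + γ) ^ n *
      (|y| ^ (α - 1) / (2 * β ^ α * Real.Gamma α) * Real.exp (-|y| / β) *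
        ((δ ^ ζ * β ^ (ζ - 1) / Real.Gamma ζ) * Real.exp (-δ * β)))‖
      ≤ ∑ k ∈ Finset.range (n + 1),
          ((n.choose k : ℝ) * |γ| ^ k * 2 * Real.Gamma (α + (n - k : ℕ)) *
            δ ^ ζ / (2 * Real.Gamma α * Real.Gamma ζ)) *
          (β ^ (ζ + (n - k : ℕ) - 1) * Real.exp (-(δ * β))) := by
  have hc0 : (0:ℝ) ≤ 1 / (2 * β ^ α * Real.Gamma α) *
      ((δ ^ ζ * β ^ (ζ - 1) / Real.Gamma ζ) * Real.exp (-δ * β)) := by positivity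
  have hptw : ∀ y : ℝ, ‖(y + γ) ^ n *
      (|y| ^ (α - 1) / (2 * β ^ α * Real.Gamma α) * Real.exp (-|y| / β) *
        ((δ ^ ζ * β ^ (ζ - 1) / Real.Gamma ζ) * Real.exp (-δ * β)))‖
      ≤ ∑ k ∈ Finset.range (n + 1),
          (|γ| ^ k * (n.choose k : ℝ) * (1 / (2 * β ^ α * Real.Gamma α) *
            ((δ ^ ζ * β ^ (ζ - 1) / Real.Gamma ζ) * Real.exp (-δ * β)))) *
          (|y| ^ (n - k) * (|y| ^ (α - 1) * Real.exp (-|y| / β))) := by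
    intro y
    have hD : (0:ℝ) ≤ |y| ^ (α - 1) * Real.exp (-|y| / β) :=
      mul_nonneg (Real.rpow_nonneg (abs_nonneg y) _) (Real.exp_pos _).le
    have h2 : |y| ^ (α - 1) / (2 * β ^ α * Real.Gamma α) * Real.exp (-|y| / β) *
        ((δ ^ ζ * β ^ (ζ - 1) / Real.Gamma ζ) * Real.exp (-δ * β))
        = (|y| ^ (α - 1) * Real.exp (-|y| / β)) * (1 / (2 * β ^ α * Real.Gamma α) *
            ((δ ^ ζ * β ^ (ζ - 1) / Real.Gamma ζ) * Real.exp (-δ * β))) := by ring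
    rw [Real.norm_eq_abs, abs_mul, abs_pow, h2, abs_of_nonneg (mul_nonneg hD hc0)]
    calc |y + γ| ^ n * ((|y| ^ (α - 1) * Real.exp (-|y| / β)) * _)
        ≤ (|y| + |γ|) ^ n * ((|y| ^ (α - 1) * Real.exp (-|y| / β)) * (1 / (2 * β ^ α * Real.Gamma α) *
            ((δ ^ ζ * β ^ (ζ - 1) / Real.Gamma ζ) * Real.exp (-δ * β)))) :=
          mul_le_mul_of_nonneg_right (pow_le_pow_left₀ (abs_nonneg _) (abs_add_le y γ) n)
            (mul_nonneg hD hc0)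
      _ = _ := by
          rw [add_comm |y| |γ|, add_pow, Finset.sum_mul]
          exact Finset.sum_congr rfl fun k _ => by ring
  have hbint : Integrable (fun y : ℝ => ∑ k ∈ Finset.range (n + 1),
      (|γ| ^ k * (n.choose k : ℝ) * (1 / (2 * β ^ α * Real.Gamma α) *
        ((δ ^ ζ * β ^ (ζ - 1) / Real.Gamma ζ) * Real.exp (-δ * β)))) *
      (|y| ^ (n - k) * (|y| ^ (α - 1) * Real.exp (-|y| / β)))) :=
    integrable_finset_sum _ fun k _ => ((absline hα hβ (n - k)).1.const_mul _)
  calc ∫ y : ℝ, ‖(y + γ) ^ n *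
      (|y| ^ (α - 1) / (2 * β ^ α * Real.Gamma α) * Real.exp (-|y| / β) *
        ((δ ^ ζ * β ^ (ζ - 1) / Real.Gamma ζ) * Real.exp (-δ * β)))‖
      ≤ ∫ y : ℝ, ∑ k ∈ Finset.range (n + 1),
          (|γ| ^ k * (n.choose k : ℝ) * (1 / (2 * β ^ α * Real.Gamma α) *
            ((δ ^ ζ * β ^ (ζ - 1) / Real.Gamma ζ) * Real.exp (-δ * β)))) *
          (|y| ^ (n - k) * (|y| ^ (α - 1) * Real.exp (-|y| / β))) :=
      integral_mono ((inner_int hα hζ hδ hβ n).1.norm) hbint hptw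
    _ = _ := by
        rw [integral_finset_sum _ fun k _ => ((absline hα hβ (n - k)).1.const_mul _)]
        refine Finset.sum_congr rfl fun k hk => ?_
        rw [integral_const_mul, (absline hα hβ (n - k)).2]
        have h1 : β ^ (α + ((n - k : ℕ) : ℝ)) = β ^ α * β ^ ((n - k : ℕ) : ℝ) :=
          Real.rpow_add hβ _ _
        have h2 : β ^ (ζ + ((n - k : ℕ) : ℝ) - 1) = β ^ (ζ - 1) * β ^ ((n - k : ℕ) : ℝ) := by
          rw [show ζ + ((n - k : ℕ) : ℝ) - 1 = (ζ - 1) + ((n - k : ℕ) : ℝ) by ring,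
            Real.rpow_add hβ]
        rw [h1, h2, neg_mul]
        have hβα : β ^ α ≠ 0 := (Real.rpow_pos_of_pos hβ α).ne'
        have hΓα : Real.Gamma α ≠ 0 := (Real.Gamma_pos_of_pos hα).ne'
        have hΓζ : Real.Gamma ζ ≠ 0 := (Real.Gamma_pos_of_pos hζ).ne'
        field_simp

end SKDAux

/-- The n-th moment of the symmetric K-distribution. -/
theorem skd_nth_moment (α ζ δ γ : ℝ) (hα : 0 < α) (hζ : 0 < ζ) (hδ : 0 < δ) (n : ℕ) :
    ∫ x : ℝ, x ^ n * skdDensity α ζ δ γ x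
      = ∑ k ∈ Finset.range (n + 1),
          (n.factorial : ℝ) * Real.Gamma (α + (n - k : ℕ)) * Real.Gamma (ζ + (n - k : ℕ)) /
              ((k.factorial : ℝ) * ((n - k).factorial : ℝ) * Real.Gamma α * Real.Gamma ζ) *
            (γ ^ k * ((-1 : ℝ) ^ (n - k) + 1) / (2 * δ ^ (n - k))) := by
  -- the translated, fully expanded integrand, as a function of (y, β)
  set f : ℝ → ℝ → ℝ := fun y β => (y + γ) ^ n *
      (|y| ^ (α - 1) / (2 * β ^ α * Real.Gamma α) * Real.exp (-|y| / β) *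
        ((δ ^ ζ * β ^ (ζ - 1) / Real.Gamma ζ) * Real.exp (-δ * β))) with hfdef
  -- measurability on the product
  have hmeas : AEStronglyMeasurable (Function.uncurry f)
      ((volume : Measure ℝ).prod ((volume : Measure ℝ).restrict (Set.Ioi 0))) := by
    apply Measurable.aestronglyMeasurable
    simp only [Function.uncurry, hfdef]
    fun_prop
  -- Fubini integrability
  have hFub : Integrable (Function.uncurry f)
      ((volume : Measure ℝ).prod ((volume : Measure ℝ).restrict (Set.Ioi 0))) := by
    refine (integrable_prod_iff' hmeas).mpr ⟨?_, ?_⟩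
    · filter_upwards [ae_restrict_mem measurableSet_Ioi] with β hβ
      exact (inner_int hα hζ hδ (Set.mem_Ioi.mp hβ) n).1
    · refine Integrable.mono' (g := fun β => ∑ k ∈ Finset.range (n + 1),
          ((n.choose k : ℝ) * |γ| ^ k * 2 * Real.Gamma (α + (n - k : ℕ)) *
            δ ^ ζ / (2 * Real.Gamma α * Real.Gamma ζ)) *
          (β ^ (ζ + (n - k : ℕ) - 1) * Real.exp (-(δ * β)))) ?_ ?_ ?_
      · exact integrable_finset_sum _ fun k _ =>
          ((gammaIntOn (by positivity) hδ).const_mul _)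
      · exact ((hmeas.norm).prod_swap).integral_prod_right'
      · filter_upwards [ae_restrict_mem measurableSet_Ioi] with β hβ
        rw [Real.norm_eq_abs, abs_of_nonneg (integral_nonneg fun y => norm_nonneg _)]
        exact inner_abs hα hζ hδ (Set.mem_Ioi.mp hβ) n
  -- unfold the density and pull `x ^ n` inside the inner integral
  have h1 : (∫ x : ℝ, x ^ n * skdDensity α ζ δ γ x)
      = ∫ x : ℝ, ∫ β in Set.Ioi (0:ℝ), x ^ n *
          (|x - γ| ^ (α - 1) / (2 * β ^ α * Real.Gamma α) * Real.exp (-|x - γ| / β) *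
            ((δ ^ ζ * β ^ (ζ - 1) / Real.Gamma ζ) * Real.exp (-δ * β))) := by
    simp_rw [skdDensity, integral_const_mul]
  rw [h1]
  -- translate by γ
  rw [← integral_add_right_eq_self (fun x : ℝ => ∫ β in Set.Ioi (0:ℝ), x ^ n *
          (|x - γ| ^ (α - 1) / (2 * β ^ α * Real.Gamma α) * Real.exp (-|x - γ| / β) *
            ((δ ^ ζ * β ^ (ζ - 1) / Real.Gamma ζ) * Real.exp (-δ * β)))) γ]
  simp only [add_sub_cancel_right]
  -- swap the order of integration
  rw [show (fun x : ℝ => ∫ β in Set.Ioi (0:ℝ), (x + γ) ^ n *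
          (|x| ^ (α - 1) / (2 * β ^ α * Real.Gamma α) * Real.exp (-|x| / β) *
            ((δ ^ ζ * β ^ (ζ - 1) / Real.Gamma ζ) * Real.exp (-δ * β))))
      = fun x : ℝ => ∫ β in Set.Ioi (0:ℝ), f x β from rfl]
  rw [integral_integral_swap hFub]
  -- evaluate the inner integral
  rw [setIntegral_congr_fun measurableSet_Ioi
      (fun β hβ => (inner_int hα hζ hδ (Set.mem_Ioi.mp hβ) n).2)]
  -- integrate term by term in β
  rw [integral_finset_sum _ fun k _ => ((gammaIntOn (by positivity) hδ).const_mul _)]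
  refine Finset.sum_congr rfl fun k hk => ?_
  rw [integral_const_mul, integral_rpow_mul_exp_neg_mul_Ioi (by positivity) hδ]
  -- final scalar computation
  have hkn : k ≤ n := Nat.lt_succ_iff.mp (Finset.mem_range.mp hk)
  rw [Nat.cast_choose ℝ hkn]
  have hδpow : (1/δ) ^ (ζ + ((n - k : ℕ) : ℝ)) = (δ ^ ζ * δ ^ (n - k))⁻¹ := by
    rw [one_div, Real.inv_rpow hδ.le, Real.rpow_add hδ, Real.rpow_natCast]
  rw [hδpow]
  have h2 : (2:ℝ) ≠ 0 := two_ne_zero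
  have hΓα : Real.Gamma α ≠ 0 := (Real.Gamma_pos_of_pos hα).ne'
  have hΓζ : Real.Gamma ζ ≠ 0 := (Real.Gamma_pos_of_pos hζ).ne'
  have hδζ : δ ^ ζ ≠ 0 := (Real.rpow_pos_of_pos hδ ζ).ne'
  have hδm : δ ^ (n - k) ≠ 0 := (pow_pos hδ _).ne'
  have hfk : (k.factorial : ℝ) ≠ 0 := Nat.cast_ne_zero.mpr k.factorial_ne_zero
  have hfnk : ((n - k).factorial : ℝ) ≠ 0 := Nat.cast_ne_zero.mpr (n - k).factorial_ne_zero
  field_simp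
end

section
/- For all parameters α > 0, ζ > 0, δ > 0 and γ ∈ ℝ, the second moment of the symmetric K-distribution equals μ_2 = ∫_{-∞}^{∞} x^{2} f(x) dx = α(α+1)ζ(ζ+1)/δ² + γ², where f is the SKD density. -/
open Real MeasureTheory

section skdAuxSection
open Set


lemma skdAux.intOn {s b : ℝ} (hs : -1 < s) (hb : 0 < b) :
    IntegrableOn (fun t : ℝ => t ^ s * Real.exp (-b * t)) (Set.Ioi 0) := by
  have := integrableOn_rpow_mul_exp_neg_mul_rpow (p := 1) hs one_pos hb
  simpa [Real.rpow_one] using this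

lemma skdAux.integrable_comp_abs {f : ℝ → ℝ} (hf : IntegrableOn f (Set.Ioi 0)) :
    Integrable fun x : ℝ => f |x| := by
  have h1 : IntegrableOn (fun x : ℝ => f |x|) (Set.Ioi 0) :=
    hf.congr_fun (fun x hx => by rw [abs_of_pos hx]) measurableSet_Ioi
  have h2 : IntegrableOn (fun x : ℝ => f |x|) (Set.Iic 0) := by
    rw [← Measure.map_neg_eq_self (volume : Measure ℝ)]
    have m : MeasurableEmbedding (Neg.neg : ℝ → ℝ) := (Homeomorph.neg ℝ).measurableEmbedding
    rw [m.integrableOn_map_iff]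
    simp_rw [Function.comp_def, abs_neg, Set.neg_preimage, Set.neg_Iic, neg_zero]
    exact Iff.mpr integrableOn_Ici_iff_integrableOn_Ioi h1
  rw [← integrableOn_univ, ← Set.Iic_union_Ioi (a := (0:ℝ))]
  exact h2.union h1

lemma skdAux.abs_integral {s b : ℝ} (hs : 0 < s) (hb : 0 < b) :
    ∫ x : ℝ, |x| ^ (s - 1) * Real.exp (-b * |x|) = 2 * ((1 / b) ^ s * Real.Gamma s) := by
  rw [integral_comp_abs (f := fun t : ℝ => t ^ (s - 1) * Real.exp (-b * t))]
  simp_rw [neg_mul]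
  rw [integral_rpow_mul_exp_neg_mul_Ioi hs hb]

lemma skdAux.odd_integral (s b : ℝ) :
    ∫ x : ℝ, x * (|x| ^ s * Real.exp (-b * |x|)) = 0 := by
  set f : ℝ → ℝ := fun x => x * (|x| ^ s * Real.exp (-b * |x|)) with hf
  have h : ∀ x : ℝ, f (-x) = -f x := by
    intro x; simp only [hf, abs_neg]; ring
  have h1 : ∫ x : ℝ, f (-x) = ∫ x : ℝ, f x := integral_neg_eq_self f volume
  simp_rw [h, integral_neg] at h1
  linarith



lemma skdAux.abs_integrable {s b : ℝ} (hs : -1 < s) (hb : 0 < b) :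
    Integrable (fun x : ℝ => |x| ^ s * Real.exp (-b * |x|)) :=
  skdAux.integrable_comp_abs (f := fun t : ℝ => t ^ s * Real.exp (-b * t)) (skdAux.intOn hs hb)

-- the translated integrand, decomposed
lemma skdAux.split (α γ : ℝ) (hα : 0 < α) (b : ℝ) (u : ℝ) :
    (u + γ) ^ 2 * (|u| ^ (α - 1) * Real.exp (-b * |u|))
      = |u| ^ (α + 1) * Real.exp (-b * |u|)
        + ((2 * γ) * (u * (|u| ^ (α - 1) * Real.exp (-b * |u|)))
        + γ ^ 2 * (|u| ^ (α - 1) * Real.exp (-b * |u|))) := by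
  rcases eq_or_ne u 0 with rfl | hu
  · rw [abs_zero, Real.zero_rpow (show α + 1 ≠ 0 by positivity)]; ring
  · have h0 : (0:ℝ) < |u| := abs_pos.mpr hu
    have e1 : |u| ^ (α + 1) = u ^ 2 * |u| ^ (α - 1) := by
      rw [show α + 1 = (α - 1) + 2 by ring, Real.rpow_add h0,
        show (2:ℝ) = ((2:ℕ):ℝ) by norm_num, Real.rpow_natCast, sq_abs]
      ring
    rw [e1]; ring

lemma skdAux.x_integrable {α γ β : ℝ} (hα : 0 < α) (hβ : 0 < β) :
    Integrable (fun x : ℝ => x ^ 2 * (|x - γ| ^ (α - 1) * Real.exp (-|x - γ| / β))) := by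
  have hb : 0 < 1/β := by positivity
  have hsum : Integrable (fun u : ℝ =>
      (u + γ) ^ 2 * (|u| ^ (α - 1) * Real.exp (-(1/β) * |u|))) := by
    have i1 := skdAux.abs_integrable (s := α + 1) (b := 1/β) (by linarith) hb
    have i3 := skdAux.abs_integrable (s := α - 1) (b := 1/β) (by linarith) hb
    have iα := skdAux.abs_integrable (s := α) (b := 1/β) (by linarith) hb
    have i2 : Integrable (fun u : ℝ => u * (|u| ^ (α - 1) * Real.exp (-(1/β) * |u|))) := by
      refine iα.mono' ?_ ?_
      · apply Measurable.aestronglyMeasurable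
        fun_prop
      · refine Filter.Eventually.of_forall (fun u => ?_)
        rcases eq_or_ne u 0 with rfl | hu
        · simp [Real.zero_rpow hα.ne']
        · have h0 : (0:ℝ) < |u| := abs_pos.mpr hu
          have e1 : |u| * |u| ^ (α - 1) = |u| ^ α := by
            rw [Real.rpow_sub h0, Real.rpow_one]; field_simp
          refine le_of_eq ?_
          rw [Real.norm_eq_abs, abs_mul, abs_mul,
            abs_of_nonneg (Real.rpow_nonneg (abs_nonneg u) _),
            abs_of_pos (Real.exp_pos _), ← mul_assoc, e1]
    have := i1.add ((i2.const_mul (2 * γ)).add (i3.const_mul (γ ^ 2)))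
    exact this.congr (Filter.Eventually.of_forall fun u =>
      (skdAux.split α γ hα (1/β) u).symm)
  have := hsum.comp_sub_right γ
  refine this.congr (Filter.Eventually.of_forall fun x => ?_)
  simp only [sub_add_cancel]
  rw [show -(1/β) * |x - γ| = -|x - γ| / β by ring]

lemma skdAux.x_integral {α γ β : ℝ} (hα : 0 < α) (hβ : 0 < β) :
    ∫ x : ℝ, x ^ 2 * (|x - γ| ^ (α - 1) * Real.exp (-|x - γ| / β))
      = 2 * (β ^ (α + 2) * Real.Gamma (α + 2)) + γ ^ 2 * (2 * (β ^ α * Real.Gamma α)) := by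
  have hb : 0 < 1/β := by positivity
  have hE : ∀ x : ℝ, x ^ 2 * (|x - γ| ^ (α - 1) * Real.exp (-|x - γ| / β))
      = (fun u : ℝ => (u + γ) ^ 2 * (|u| ^ (α - 1) * Real.exp (-(1/β) * |u|))) (x - γ) := by
    intro x
    simp only [sub_add_cancel]
    rw [show -(1/β) * |x - γ| = -|x - γ| / β by ring]
  simp_rw [hE]
  rw [integral_sub_right_eq_self
    (fun u : ℝ => (u + γ) ^ 2 * (|u| ^ (α - 1) * Real.exp (-(1/β) * |u|))) γ]
  simp_rw [skdAux.split α γ hα (1/β)]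
  have i1 := skdAux.abs_integrable (s := α + 1) (b := 1/β) (by linarith) hb
  have i3 := skdAux.abs_integrable (s := α - 1) (b := 1/β) (by linarith) hb
  have iα := skdAux.abs_integrable (s := α) (b := 1/β) (by linarith) hb
  have i2 : Integrable (fun u : ℝ => u * (|u| ^ (α - 1) * Real.exp (-(1/β) * |u|))) := by
    refine iα.mono' (Measurable.aestronglyMeasurable (by fun_prop))
      (Filter.Eventually.of_forall (fun u => ?_))
    rcases eq_or_ne u 0 with rfl | hu
    · simp [Real.zero_rpow hα.ne']
    · have h0 : (0:ℝ) < |u| := abs_pos.mpr hu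
      have e1 : |u| * |u| ^ (α - 1) = |u| ^ α := by
        rw [Real.rpow_sub h0, Real.rpow_one]; field_simp
      refine le_of_eq ?_
      rw [Real.norm_eq_abs, abs_mul, abs_mul,
        abs_of_nonneg (Real.rpow_nonneg (abs_nonneg u) _),
        abs_of_pos (Real.exp_pos _), ← mul_assoc, e1]
  have hg2 : Integrable (fun u : ℝ =>
      2 * γ * (u * (|u| ^ (α - 1) * Real.exp (-(1/β) * |u|)))) := i2.const_mul _
  have hg3 : Integrable (fun u : ℝ =>
      γ ^ 2 * (|u| ^ (α - 1) * Real.exp (-(1/β) * |u|))) := i3.const_mul _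
  have hg : Integrable (fun u : ℝ =>
      2 * γ * (u * (|u| ^ (α - 1) * Real.exp (-(1/β) * |u|)))
        + γ ^ 2 * (|u| ^ (α - 1) * Real.exp (-(1/β) * |u|))) := hg2.add hg3
  rw [integral_add i1 hg, integral_add hg2 hg3,
    integral_const_mul, integral_const_mul, skdAux.odd_integral]
  have v1 : ∫ u : ℝ, |u| ^ (α + 1) * Real.exp (-(1/β) * |u|)
      = 2 * ((1/(1/β)) ^ (α + 2) * Real.Gamma (α + 2)) := by
    have := skdAux.abs_integral (s := α + 2) (b := 1/β) (by linarith) hb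
    rw [show α + 2 - 1 = α + 1 by ring] at this
    exact this
  have v3 : ∫ u : ℝ, |u| ^ (α - 1) * Real.exp (-(1/β) * |u|)
      = 2 * ((1/(1/β)) ^ α * Real.Gamma α) := skdAux.abs_integral hα hb
  rw [v1, v3, one_div_one_div]
  ring




lemma skdAux.beta_pt {α ζ δ γ : ℝ} {β : ℝ} (hβ : 0 < β) :
    (δ ^ ζ * β ^ (ζ - 1) / Real.Gamma ζ * Real.exp (-δ * β)) * (α * (α + 1) * β ^ 2 + γ ^ 2)
      = (α * (α + 1) * (δ ^ ζ / Real.Gamma ζ)) * (β ^ (ζ + 2 - 1) * Real.exp (-δ * β))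
        + (γ ^ 2 * (δ ^ ζ / Real.Gamma ζ)) * (β ^ (ζ - 1) * Real.exp (-δ * β)) := by
  have hb2 : β ^ (ζ + 2 - 1) = β ^ (ζ - 1) * β ^ 2 := by
    rw [show ζ + 2 - 1 = (ζ - 1) + 2 by ring, Real.rpow_add hβ,
      show (2:ℝ) = ((2:ℕ):ℝ) by norm_num, Real.rpow_natCast]
  rw [hb2]; ring

lemma skdAux.beta_integrable {α ζ δ γ : ℝ} (hζ : 0 < ζ) (hδ : 0 < δ) :
    IntegrableOn (fun β : ℝ =>
      (δ ^ ζ * β ^ (ζ - 1) / Real.Gamma ζ * Real.exp (-δ * β)) * (α * (α + 1) * β ^ 2 + γ ^ 2))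
      (Set.Ioi 0) := by
  have h1 := skdAux.intOn (s := ζ + 2 - 1) (b := δ) (by linarith) hδ
  have h2 := skdAux.intOn (s := ζ - 1) (b := δ) (by linarith) hδ
  have hsum : IntegrableOn (fun β : ℝ =>
      (α * (α + 1) * (δ ^ ζ / Real.Gamma ζ)) * (β ^ (ζ + 2 - 1) * Real.exp (-δ * β))
        + (γ ^ 2 * (δ ^ ζ / Real.Gamma ζ)) * (β ^ (ζ - 1) * Real.exp (-δ * β))) (Set.Ioi 0) :=
    (h1.const_mul _).add (h2.const_mul _)
  exact hsum.congr_fun (fun β hβ => (skdAux.beta_pt (Set.mem_Ioi.mp hβ)).symm) measurableSet_Ioi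

lemma skdAux.beta_integral {α ζ δ γ : ℝ} (hα : 0 < α) (hζ : 0 < ζ) (hδ : 0 < δ) :
    ∫ β in Set.Ioi (0:ℝ),
      (δ ^ ζ * β ^ (ζ - 1) / Real.Gamma ζ * Real.exp (-δ * β)) * (α * (α + 1) * β ^ 2 + γ ^ 2)
      = α * (α + 1) * ζ * (ζ + 1) / δ ^ 2 + γ ^ 2 := by
  have hΓζ : (0:ℝ) < Real.Gamma ζ := Real.Gamma_pos_of_pos hζ
  have h1 := skdAux.intOn (s := ζ + 2 - 1) (b := δ) (by linarith) hδ
  have h2 := skdAux.intOn (s := ζ - 1) (b := δ) (by linarith) hδ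
  rw [setIntegral_congr_fun measurableSet_Ioi
    (fun β hβ => skdAux.beta_pt (Set.mem_Ioi.mp hβ) (α := α) (γ := γ))]
  rw [integral_add (h1.const_mul _) (h2.const_mul _), integral_const_mul, integral_const_mul]
  have v : ∀ s : ℝ, 0 < s →
      ∫ t in Set.Ioi (0:ℝ), t ^ (s - 1) * Real.exp (-δ * t) = (1/δ) ^ s * Real.Gamma s := by
    intro s hs; simp_rw [neg_mul]; exact integral_rpow_mul_exp_neg_mul_Ioi hs hδ
  rw [v (ζ + 2) (by linarith), v ζ hζ]
  have hΓ2 : Real.Gamma (ζ + 2) = (ζ + 1) * (ζ * Real.Gamma ζ) := by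
    rw [show ζ + 2 = (ζ + 1) + 1 by ring, Real.Gamma_add_one (by positivity),
      Real.Gamma_add_one hζ.ne']
  have hsplit : (1/δ) ^ (ζ + 2) = (1/δ) ^ ζ * (1/δ) ^ (2:ℕ) := by
    rw [Real.rpow_add (by positivity), ← Real.rpow_natCast (1/δ) 2]
    norm_num
  have hAB : δ ^ ζ * (1/δ) ^ ζ = 1 := by
    rw [← Real.mul_rpow hδ.le (by positivity), mul_one_div_cancel hδ.ne', Real.one_rpow]
  have hB : (1/δ:ℝ) ^ ζ = (δ ^ ζ)⁻¹ := (inv_eq_of_mul_eq_one_right hAB).symm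
  rw [hΓ2, hsplit, hB]
  have hA : (δ:ℝ) ^ ζ ≠ 0 := (Real.rpow_pos_of_pos hδ ζ).ne'
  field_simp

lemma skdAux.x_full {α ζ δ γ : ℝ} (hα : 0 < α) {β : ℝ} (hβ : 0 < β) :
    ∫ x : ℝ, x ^ 2 * ((|x - γ| ^ (α - 1) / (2 * β ^ α * Real.Gamma α)) * Real.exp (-|x - γ| / β) *
      ((δ ^ ζ * β ^ (ζ - 1) / Real.Gamma ζ) * Real.exp (-δ * β)))
      = (δ ^ ζ * β ^ (ζ - 1) / Real.Gamma ζ * Real.exp (-δ * β)) * (α * (α + 1) * β ^ 2 + γ ^ 2) := by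
  have hΓα : (0:ℝ) < Real.Gamma α := Real.Gamma_pos_of_pos hα
  set c : ℝ := (δ ^ ζ * β ^ (ζ - 1) / Real.Gamma ζ) * Real.exp (-δ * β) / (2 * β ^ α * Real.Gamma α)
    with hc
  have hpt : ∀ x : ℝ,
      x ^ 2 * ((|x - γ| ^ (α - 1) / (2 * β ^ α * Real.Gamma α)) * Real.exp (-|x - γ| / β) *
        ((δ ^ ζ * β ^ (ζ - 1) / Real.Gamma ζ) * Real.exp (-δ * β)))
      = c * (x ^ 2 * (|x - γ| ^ (α - 1) * Real.exp (-|x - γ| / β))) := fun x => by rw [hc]; ring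
  simp_rw [hpt]
  rw [integral_const_mul, skdAux.x_integral hα hβ]
  have hβα : β ^ (α + 2) = β ^ α * β ^ 2 := by
    rw [Real.rpow_add hβ, show (2:ℝ) = ((2:ℕ):ℝ) by norm_num, Real.rpow_natCast]
  have hΓ2 : Real.Gamma (α + 2) = (α + 1) * (α * Real.Gamma α) := by
    rw [show α + 2 = (α + 1) + 1 by ring, Real.Gamma_add_one (by positivity),
      Real.Gamma_add_one hα.ne']
  rw [hc, hβα, hΓ2]
  rw [div_mul_eq_mul_div, div_eq_iff (ne_of_gt (by positivity : (0:ℝ) < 2 * β ^ α * Real.Gamma α))]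
  ring


end skdAuxSection

/-- The second moment of the symmetric K-distribution. -/
theorem skd_second_moment (α ζ δ γ : ℝ) (hα : 0 < α) (hζ : 0 < ζ) (hδ : 0 < δ) :
    ∫ x : ℝ, x ^ 2 * skdDensity α ζ δ γ x
      = α * (α + 1) * ζ * (ζ + 1) / δ ^ 2 + γ ^ 2 := by
  set G : ℝ → ℝ → ℝ := fun β x =>
    x ^ 2 * ((|x - γ| ^ (α - 1) / (2 * β ^ α * Real.Gamma α)) * Real.exp (-|x - γ| / β) *
      ((δ ^ ζ * β ^ (ζ - 1) / Real.Gamma ζ) * Real.exp (-δ * β))) with hGdef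
  have step1 : (∫ x : ℝ, x ^ 2 * skdDensity α ζ δ γ x)
      = ∫ x : ℝ, ∫ β in Set.Ioi (0:ℝ), G β x := by
    refine integral_congr_ae (Filter.Eventually.of_forall fun x => ?_)
    simp only [skdDensity, hGdef]
    exact (integral_const_mul _ _).symm
  have hmeas : AEStronglyMeasurable (Function.uncurry G)
      ((volume.restrict (Set.Ioi 0)).prod volume) := by
    apply Measurable.aestronglyMeasurable
    rw [hGdef]
    unfold Function.uncurry
    fun_prop
  have c1 : ∀ᵐ β ∂(volume.restrict (Set.Ioi (0:ℝ))), Integrable (fun x => G β x) := by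
    filter_upwards [ae_restrict_mem measurableSet_Ioi] with β hβ
    have hβ' : (0:ℝ) < β := hβ
    have := (skdAux.x_integrable (γ := γ) hα hβ').const_mul
      ((δ ^ ζ * β ^ (ζ - 1) / Real.Gamma ζ) * Real.exp (-δ * β) / (2 * β ^ α * Real.Gamma α))
    exact this.congr (Filter.Eventually.of_forall fun x => by simp only [hGdef]; ring)
  have key : ∀ β : ℝ, 0 < β → (∫ x : ℝ, ‖G β x‖)
      = (δ ^ ζ * β ^ (ζ - 1) / Real.Gamma ζ * Real.exp (-δ * β)) * (α * (α + 1) * β ^ 2 + γ ^ 2) := by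
    intro β hβ
    have hΓα : (0:ℝ) < Real.Gamma α := Real.Gamma_pos_of_pos hα
    have hΓζ : (0:ℝ) < Real.Gamma ζ := Real.Gamma_pos_of_pos hζ
    have hnn : ∀ x : ℝ, 0 ≤ G β x := by
      intro x
      simp only [hGdef]
      have h1 : (0:ℝ) ≤ |x - γ| ^ (α - 1) := Real.rpow_nonneg (abs_nonneg _) _
      positivity
    have : (fun x : ℝ => ‖G β x‖) = fun x => G β x :=
      funext fun x => by rw [Real.norm_eq_abs, abs_of_nonneg (hnn x)]
    rw [this]
    exact skdAux.x_full hα hβ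
  have c2 : Integrable (fun β : ℝ => ∫ x : ℝ, ‖G β x‖) (volume.restrict (Set.Ioi 0)) := by
    refine (skdAux.beta_integrable (α := α) (γ := γ) hζ hδ).congr ?_
    filter_upwards [ae_restrict_mem measurableSet_Ioi] with β hβ
    exact (key β hβ).symm
  have hInt : Integrable (Function.uncurry G) ((volume.restrict (Set.Ioi 0)).prod volume) :=
    (integrable_prod_iff hmeas).2 ⟨c1, c2⟩
  rw [step1, ← integral_integral_swap hInt]
  simp only [hGdef]
  rw [setIntegral_congr_fun measurableSet_Ioi
    (fun β hβ => skdAux.x_full (ζ := ζ) (δ := δ) (γ := γ) hα (Set.mem_Ioi.mp hβ))]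
  exact skdAux.beta_integral hα hζ hδ
end

section
/- For all parameters α > 0, ζ > 0, δ > 0 and γ ∈ ℝ, the third moment of the symmetric K-distribution equals μ_3 = ∫_{-∞}^{∞} x^{3} f(x) dx = 3 α(α+1)γζ(ζ+1)/δ² + γ³, where f is the SKD density. -/
open Real MeasureTheory Set


lemma skd_aux_intOn {p b : ℝ} (hp : 0 < p) (hb : 0 < b) :
    IntegrableOn (fun t : ℝ => t ^ (p - 1) * Real.exp (-(b * t))) (Set.Ioi 0) := by
  have := integrableOn_rpow_mul_exp_neg_mul_rpow (p := 1) (s := p - 1) (b := b)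
    (by linarith) zero_lt_one hb
  simpa [Real.rpow_one, neg_mul] using this

lemma skd_aux_int_abs {p b : ℝ} (hp : 0 < p) (hb : 0 < b) :
    Integrable (fun t : ℝ => |t| ^ (p - 1) * Real.exp (-(b * |t|))) := by
  have hIoi : IntegrableOn (fun t : ℝ => |t| ^ (p - 1) * Real.exp (-(b * |t|))) (Set.Ioi 0) := by
    apply ((skd_aux_intOn hp hb).congr_fun (fun x hx => ?_) measurableSet_Ioi)
    rw [abs_of_pos hx]
  have hIic : IntegrableOn (fun t : ℝ => |t| ^ (p - 1) * Real.exp (-(b * |t|))) (Set.Iic 0) := by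
    rw [IntegrableOn, ← Measure.map_neg_eq_self (volume : Measure ℝ)]
    have m : MeasurableEmbedding fun x : ℝ => -x := (Homeomorph.neg ℝ).measurableEmbedding
    rw [Measure.restrict_map m.measurable measurableSet_Iic]
    rw [m.integrable_map_iff]
    simp_rw [Function.comp_def, abs_neg]
    simp only [neg_preimage, neg_Iic, neg_zero]
    exact Iff.mpr integrableOn_Ici_iff_integrableOn_Ioi hIoi
  have := hIic.union hIoi
  rwa [Set.Iic_union_Ioi, integrableOn_univ] at this

lemma skd_aux_val_abs {p b : ℝ} (hp : 0 < p) (hb : 0 < b) :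
    ∫ t : ℝ, |t| ^ (p - 1) * Real.exp (-(b * |t|)) = 2 * ((1 / b) ^ p * Real.Gamma p) := by
  rw [integral_comp_abs (f := fun t => t ^ (p - 1) * Real.exp (-(b * t))),
    integral_rpow_mul_exp_neg_mul_Ioi hp hb]

lemma skd_aux_odd {f : ℝ → ℝ} (h : ∀ x, f (-x) = -f x) : ∫ x : ℝ, f x = 0 := by
  have h1 : ∫ x : ℝ, f (-x) = ∫ x : ℝ, f x := integral_neg_eq_self f volume
  simp_rw [h, integral_neg] at h1
  linarith

lemma skd_aux_abs_rpow_mul {p : ℝ} (hp : 0 < p) (m : ℕ) (t : ℝ) :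
    |t| ^ m * |t| ^ (p - 1) = |t| ^ (p + m - 1) := by
  rcases eq_or_ne t 0 with rfl | ht
  · rcases Nat.eq_zero_or_pos m with rfl | hm
    · simp
    · have h1 : (0:ℝ) < p + m - 1 := by
        have : (1:ℝ) ≤ m := by exact_mod_cast hm
        linarith
      rw [abs_zero, zero_pow hm.ne', zero_mul, Real.zero_rpow h1.ne']
  · rw [← Real.rpow_natCast |t| m, ← Real.rpow_add (abs_pos.2 ht)]
    ring_nf


lemma skd_key {α β : ℝ} (hα : 0 < α) (hβ : 0 < β) (m : ℕ) (t : ℝ) :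
    |t| ^ m * (|t| ^ (α - 1) / (2 * β ^ α * Real.Gamma α) * Real.exp (-|t| / β))
      = (2 * β ^ α * Real.Gamma α)⁻¹ * (|t| ^ (α + m - 1) * Real.exp (-(β⁻¹ * |t|))) := by
  rw [show -|t| / β = -(β⁻¹ * |t|) by ring, ← skd_aux_abs_rpow_mul hα m t]
  ring

lemma skd_Dint {α β : ℝ} (hα : 0 < α) (hβ : 0 < β) (m : ℕ) :
    Integrable (fun t : ℝ =>
      |t| ^ m * (|t| ^ (α - 1) / (2 * β ^ α * Real.Gamma α) * Real.exp (-|t| / β))) := by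
  simp_rw [skd_key hα hβ m]
  exact (skd_aux_int_abs (by positivity) (by positivity)).const_mul _

lemma skd_Dval {α β : ℝ} (hα : 0 < α) (hβ : 0 < β) (m : ℕ) :
    ∫ t : ℝ, |t| ^ m * (|t| ^ (α - 1) / (2 * β ^ α * Real.Gamma α) * Real.exp (-|t| / β))
      = β ^ m * (Real.Gamma (α + m) / Real.Gamma α) := by
  have hΓ : 0 < Real.Gamma α := Real.Gamma_pos_of_pos hα
  have hβα : 0 < β ^ α := Real.rpow_pos_of_pos hβ α
  simp_rw [skd_key hα hβ m]
  rw [integral_const_mul, skd_aux_val_abs (by positivity) (by positivity)]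
  rw [one_div, inv_inv, Real.rpow_add hβ, Real.rpow_natCast]
  field_simp

-- t^m version, integrability
lemma skd_Dint' {α β : ℝ} (hα : 0 < α) (hβ : 0 < β) (m : ℕ) :
    Integrable (fun t : ℝ =>
      t ^ m * (|t| ^ (α - 1) / (2 * β ^ α * Real.Gamma α) * Real.exp (-|t| / β))) := by
  apply (skd_Dint hα hβ m).mono' (Measurable.aestronglyMeasurable (by fun_prop))
  refine Filter.Eventually.of_forall fun t => ?_
  have h0 : 0 ≤ |t| ^ (α - 1) / (2 * β ^ α * Real.Gamma α) * Real.exp (-|t| / β) := by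
    have := Real.Gamma_pos_of_pos hα
    have := Real.rpow_pos_of_pos hβ α
    positivity
  rw [Real.norm_eq_abs, abs_mul, abs_of_nonneg h0, abs_pow]

-- even m value
lemma skd_Dval_even {α β : ℝ} (hα : 0 < α) (hβ : 0 < β) {m : ℕ} (hm : Even m) :
    ∫ t : ℝ, t ^ m * (|t| ^ (α - 1) / (2 * β ^ α * Real.Gamma α) * Real.exp (-|t| / β))
      = β ^ m * (Real.Gamma (α + m) / Real.Gamma α) := by
  rw [show (fun t : ℝ => t ^ m * (|t| ^ (α - 1) / (2 * β ^ α * Real.Gamma α)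
      * Real.exp (-|t| / β)))
      = fun t : ℝ => |t| ^ m * (|t| ^ (α - 1) / (2 * β ^ α * Real.Gamma α)
      * Real.exp (-|t| / β)) from funext fun t => by rw [hm.pow_abs]]
  exact skd_Dval hα hβ m

-- odd m value
lemma skd_Dval_odd {α β : ℝ} {m : ℕ} (hm : Odd m) :
    ∫ t : ℝ, t ^ m * (|t| ^ (α - 1) / (2 * β ^ α * Real.Gamma α) * Real.exp (-|t| / β)) = 0 := by
  apply skd_aux_odd
  intro x
  rw [abs_neg, hm.neg_pow]
  ring


lemma skd_inner_int0 {α β : ℝ} (hα : 0 < α) (hβ : 0 < β) (γ : ℝ) :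
    Integrable (fun t : ℝ =>
      (t + γ) ^ 3 * (|t| ^ (α - 1) / (2 * β ^ α * Real.Gamma α) * Real.exp (-|t| / β))) := by
  have e : (fun t : ℝ => (t + γ) ^ 3
        * (|t| ^ (α - 1) / (2 * β ^ α * Real.Gamma α) * Real.exp (-|t| / β)))
      = fun t : ℝ =>
        (t ^ 3 * (|t| ^ (α - 1) / (2 * β ^ α * Real.Gamma α) * Real.exp (-|t| / β))
          + 3 * γ ^ 2 * (t ^ 1 * (|t| ^ (α - 1) / (2 * β ^ α * Real.Gamma α)
            * Real.exp (-|t| / β))))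
        + (3 * γ * (t ^ 2 * (|t| ^ (α - 1) / (2 * β ^ α * Real.Gamma α) * Real.exp (-|t| / β)))
          + γ ^ 3 * (t ^ 0 * (|t| ^ (α - 1) / (2 * β ^ α * Real.Gamma α)
            * Real.exp (-|t| / β)))) := funext fun t => by ring
  rw [e]
  exact (((skd_Dint' hα hβ 3).add ((skd_Dint' hα hβ 1).const_mul _)).add
    (((skd_Dint' hα hβ 2).const_mul _).add ((skd_Dint' hα hβ 0).const_mul _)))

lemma skd_inner_int {α β : ℝ} (hα : 0 < α) (hβ : 0 < β) (γ : ℝ) :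
    Integrable (fun x : ℝ =>
      x ^ 3 * (|x - γ| ^ (α - 1) / (2 * β ^ α * Real.Gamma α) * Real.exp (-|x - γ| / β))) := by
  have := (skd_inner_int0 hα hβ γ).comp_sub_right γ
  refine this.congr (Filter.Eventually.of_forall fun x => ?_)
  simp [sub_add_cancel]

lemma skd_inner_val {α β : ℝ} (hα : 0 < α) (hβ : 0 < β) (γ : ℝ) :
    ∫ x : ℝ, x ^ 3 * (|x - γ| ^ (α - 1) / (2 * β ^ α * Real.Gamma α) * Real.exp (-|x - γ| / β))
      = 3 * γ * (α * (α + 1)) * β ^ 2 + γ ^ 3 := by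
  have hΓ : 0 < Real.Gamma α := Real.Gamma_pos_of_pos hα
  rw [← integral_add_right_eq_self (μ := volume) (fun x : ℝ =>
      x ^ 3 * (|x - γ| ^ (α - 1) / (2 * β ^ α * Real.Gamma α) * Real.exp (-|x - γ| / β))) γ]
  simp only [add_sub_cancel_right]
  have e : (fun t : ℝ => (t + γ) ^ 3
        * (|t| ^ (α - 1) / (2 * β ^ α * Real.Gamma α) * Real.exp (-|t| / β)))
      = fun t : ℝ =>
        (t ^ 3 * (|t| ^ (α - 1) / (2 * β ^ α * Real.Gamma α) * Real.exp (-|t| / β))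
          + 3 * γ ^ 2 * (t ^ 1 * (|t| ^ (α - 1) / (2 * β ^ α * Real.Gamma α)
            * Real.exp (-|t| / β))))
        + (3 * γ * (t ^ 2 * (|t| ^ (α - 1) / (2 * β ^ α * Real.Gamma α) * Real.exp (-|t| / β)))
          + γ ^ 3 * (t ^ 0 * (|t| ^ (α - 1) / (2 * β ^ α * Real.Gamma α)
            * Real.exp (-|t| / β)))) := funext fun t => by ring
  rw [show (∫ x : ℝ, (x + γ) ^ 3
        * (|x| ^ (α - 1) / (2 * β ^ α * Real.Gamma α) * Real.exp (-|x| / β)))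
      = _ from congrArg _ e]
  have I3 : Integrable (fun t : ℝ =>
      t ^ 3 * (|t| ^ (α - 1) / (2 * β ^ α * Real.Gamma α) * Real.exp (-|t| / β))) :=
    skd_Dint' hα hβ 3
  have I1 : Integrable (fun t : ℝ =>
      3 * γ ^ 2 * (t ^ 1 * (|t| ^ (α - 1) / (2 * β ^ α * Real.Gamma α)
        * Real.exp (-|t| / β)))) := (skd_Dint' hα hβ 1).const_mul _
  have I2 : Integrable (fun t : ℝ =>
      3 * γ * (t ^ 2 * (|t| ^ (α - 1) / (2 * β ^ α * Real.Gamma α)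
        * Real.exp (-|t| / β)))) := (skd_Dint' hα hβ 2).const_mul _
  have I0 : Integrable (fun t : ℝ =>
      γ ^ 3 * (t ^ 0 * (|t| ^ (α - 1) / (2 * β ^ α * Real.Gamma α)
        * Real.exp (-|t| / β)))) := (skd_Dint' hα hβ 0).const_mul _
  have I31 : Integrable (fun t : ℝ =>
      t ^ 3 * (|t| ^ (α - 1) / (2 * β ^ α * Real.Gamma α) * Real.exp (-|t| / β))
        + 3 * γ ^ 2 * (t ^ 1 * (|t| ^ (α - 1) / (2 * β ^ α * Real.Gamma α)
          * Real.exp (-|t| / β)))) := I3.add I1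
  have I20 : Integrable (fun t : ℝ =>
      3 * γ * (t ^ 2 * (|t| ^ (α - 1) / (2 * β ^ α * Real.Gamma α) * Real.exp (-|t| / β)))
        + γ ^ 3 * (t ^ 0 * (|t| ^ (α - 1) / (2 * β ^ α * Real.Gamma α)
          * Real.exp (-|t| / β)))) := I2.add I0
  rw [integral_add I31 I20, integral_add I3 I1, integral_add I2 I0,
    integral_const_mul, integral_const_mul, integral_const_mul,
    skd_Dval_odd (by decide : Odd 3), skd_Dval_odd (by decide : Odd 1),
    skd_Dval_even hα hβ (by decide : Even 2), skd_Dval_even hα hβ (by decide : Even 0)]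
  have hΓ2 : Real.Gamma (α + 2) = (α + 1) * α * Real.Gamma α := by
    rw [show α + (2:ℝ) = (α + 1) + 1 by ring, Real.Gamma_add_one (by positivity),
      Real.Gamma_add_one hα.ne']
    ring
  push_cast
  rw [hΓ2]
  field_simp
  ring

lemma skd_inner_norm_le {α β : ℝ} (hα : 0 < α) (hβ : 0 < β) (γ : ℝ) :
    ∫ x : ℝ, ‖x ^ 3 * (|x - γ| ^ (α - 1) / (2 * β ^ α * Real.Gamma α)
        * Real.exp (-|x - γ| / β))‖
      ≤ 4 * (Real.Gamma (α + 3) / Real.Gamma α) * β ^ 3 + 4 * |γ| ^ 3 := by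
  have hΓ : 0 < Real.Gamma α := Real.Gamma_pos_of_pos hα
  have hβα : 0 < β ^ α := Real.rpow_pos_of_pos hβ α
  have hXnn : ∀ t : ℝ, 0 ≤ |t| ^ (α - 1) / (2 * β ^ α * Real.Gamma α) * Real.exp (-|t| / β) :=
    fun t => by positivity
  have hg0 : Integrable (fun t : ℝ =>
      4 * (|t| ^ 3 * (|t| ^ (α - 1) / (2 * β ^ α * Real.Gamma α) * Real.exp (-|t| / β)))
        + 4 * |γ| ^ 3 * (|t| ^ 0 * (|t| ^ (α - 1) / (2 * β ^ α * Real.Gamma α)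
            * Real.exp (-|t| / β)))) :=
    ((skd_Dint hα hβ 3).const_mul _).add ((skd_Dint hα hβ 0).const_mul _)
  have hg : Integrable (fun x : ℝ =>
      4 * (|x - γ| ^ 3 * (|x - γ| ^ (α - 1) / (2 * β ^ α * Real.Gamma α)
          * Real.exp (-|x - γ| / β)))
        + 4 * |γ| ^ 3 * (|x - γ| ^ 0 * (|x - γ| ^ (α - 1) / (2 * β ^ α * Real.Gamma α)
            * Real.exp (-|x - γ| / β)))) := hg0.comp_sub_right γ
  have hle : ∀ x : ℝ, ‖x ^ 3 * (|x - γ| ^ (α - 1) / (2 * β ^ α * Real.Gamma α)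
        * Real.exp (-|x - γ| / β))‖
      ≤ 4 * (|x - γ| ^ 3 * (|x - γ| ^ (α - 1) / (2 * β ^ α * Real.Gamma α)
          * Real.exp (-|x - γ| / β)))
        + 4 * |γ| ^ 3 * (|x - γ| ^ 0 * (|x - γ| ^ (α - 1) / (2 * β ^ α * Real.Gamma α)
            * Real.exp (-|x - γ| / β))) := by
    intro x
    rw [Real.norm_eq_abs, abs_mul, abs_of_nonneg (hXnn (x - γ)), abs_pow]
    have hcube : |x| ^ 3 ≤ 4 * |x - γ| ^ 3 + 4 * |γ| ^ 3 := by
      have h1 : |x| ≤ |x - γ| + |γ| := by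
        calc |x| = |x - γ + γ| := by ring_nf
        _ ≤ |x - γ| + |γ| := abs_add_le _ _
      have h2 : |x| ^ 3 ≤ (|x - γ| + |γ|) ^ 3 := by
        exact pow_le_pow_left₀ (abs_nonneg x) h1 3
      nlinarith [abs_nonneg (x - γ), abs_nonneg γ, sq_nonneg (|x - γ| - |γ|),
        mul_nonneg (add_nonneg (abs_nonneg (x - γ)) (abs_nonneg γ))
          (sq_nonneg (|x - γ| - |γ|))]
    calc |x| ^ 3 * (|x - γ| ^ (α - 1) / (2 * β ^ α * Real.Gamma α) * Real.exp (-|x - γ| / β))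
        ≤ (4 * |x - γ| ^ 3 + 4 * |γ| ^ 3)
          * (|x - γ| ^ (α - 1) / (2 * β ^ α * Real.Gamma α) * Real.exp (-|x - γ| / β)) :=
          mul_le_mul_of_nonneg_right hcube (hXnn _)
      _ = _ := by ring
  refine le_trans (integral_mono_of_nonneg (Filter.Eventually.of_forall fun x => norm_nonneg _)
    hg (Filter.Eventually.of_forall hle)) ?_
  rw [integral_add (((skd_Dint hα hβ 3).const_mul _).comp_sub_right γ)
      (((skd_Dint hα hβ 0).const_mul _).comp_sub_right γ)]
  rw [show (∫ x : ℝ, 4 * (|x - γ| ^ 3 * (|x - γ| ^ (α - 1) / (2 * β ^ α * Real.Gamma α)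
        * Real.exp (-|x - γ| / β))))
      = ∫ t : ℝ, 4 * (|t| ^ 3 * (|t| ^ (α - 1) / (2 * β ^ α * Real.Gamma α)
        * Real.exp (-|t| / β)))
    from integral_sub_right_eq_self (fun t : ℝ => 4 * (|t| ^ 3 * (|t| ^ (α - 1)
      / (2 * β ^ α * Real.Gamma α) * Real.exp (-|t| / β)))) γ]
  rw [show (∫ x : ℝ, 4 * |γ| ^ 3 * (|x - γ| ^ 0 * (|x - γ| ^ (α - 1)
        / (2 * β ^ α * Real.Gamma α) * Real.exp (-|x - γ| / β))))
      = ∫ t : ℝ, 4 * |γ| ^ 3 * (|t| ^ 0 * (|t| ^ (α - 1) / (2 * β ^ α * Real.Gamma α)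
        * Real.exp (-|t| / β)))
    from integral_sub_right_eq_self (fun t : ℝ => 4 * |γ| ^ 3 * (|t| ^ 0 * (|t| ^ (α - 1)
      / (2 * β ^ α * Real.Gamma α) * Real.exp (-|t| / β)))) γ]
  rw [integral_const_mul, integral_const_mul, skd_Dval hα hβ 3, skd_Dval hα hβ 0]
  push_cast
  simp only [pow_zero, Real.rpow_zero, add_zero, one_mul]
  apply le_of_eq
  field_simp

/-- The third moment of the symmetric K-distribution. -/
theorem skd_third_moment (α ζ δ γ : ℝ) (hα : 0 < α) (hζ : 0 < ζ) (hδ : 0 < δ) :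
    ∫ x : ℝ, x ^ 3 * skdDensity α ζ δ γ x
      = 3 * α * (α + 1) * γ * ζ * (ζ + 1) / δ ^ 2 + γ ^ 3 := by
  have hΓα : 0 < Real.Gamma α := Real.Gamma_pos_of_pos hα
  have hΓζ : 0 < Real.Gamma ζ := Real.Gamma_pos_of_pos hζ
  have step1 : ∫ x : ℝ, x ^ 3 * skdDensity α ζ δ γ x
      = ∫ x : ℝ, ∫ β in Set.Ioi (0:ℝ), x ^ 3 *
          (|x - γ| ^ (α - 1) / (2 * β ^ α * Real.Gamma α) * Real.exp (-|x - γ| / β) *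
            (δ ^ ζ * β ^ (ζ - 1) / Real.Gamma ζ * Real.exp (-δ * β))) := by
    refine integral_congr_ae (Filter.Eventually.of_forall fun x => ?_)
    unfold skdDensity
    show x ^ 3 * (∫ β in Set.Ioi (0:ℝ),
        |x - γ| ^ (α - 1) / (2 * β ^ α * Real.Gamma α) * Real.exp (-|x - γ| / β) *
          (δ ^ ζ * β ^ (ζ - 1) / Real.Gamma ζ * Real.exp (-δ * β))) = _
    rw [← integral_const_mul]
  have hmeas : AEStronglyMeasurable (Function.uncurry fun (x β : ℝ) => x ^ 3 *
      (|x - γ| ^ (α - 1) / (2 * β ^ α * Real.Gamma α) * Real.exp (-|x - γ| / β) *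
        (δ ^ ζ * β ^ (ζ - 1) / Real.Gamma ζ * Real.exp (-δ * β))))
      ((volume : Measure ℝ).prod ((volume : Measure ℝ).restrict (Set.Ioi 0))) := by
    apply Measurable.aestronglyMeasurable
    show Measurable fun q : ℝ × ℝ => q.1 ^ 3 *
      (|q.1 - γ| ^ (α - 1) / (2 * q.2 ^ α * Real.Gamma α) * Real.exp (-|q.1 - γ| / q.2) *
        (δ ^ ζ * q.2 ^ (ζ - 1) / Real.Gamma ζ * Real.exp (-δ * q.2)))
    fun_prop
  have h1 : ∀ᵐ β ∂((volume : Measure ℝ).restrict (Set.Ioi 0)),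
      Integrable (fun x : ℝ => x ^ 3 *
        (|x - γ| ^ (α - 1) / (2 * β ^ α * Real.Gamma α) * Real.exp (-|x - γ| / β) *
          (δ ^ ζ * β ^ (ζ - 1) / Real.Gamma ζ * Real.exp (-δ * β)))) := by
    filter_upwards [ae_restrict_mem measurableSet_Ioi] with β hβ
    have := (skd_inner_int hα hβ γ).mul_const
      (δ ^ ζ * β ^ (ζ - 1) / Real.Gamma ζ * Real.exp (-δ * β))
    refine this.congr (Filter.Eventually.of_forall fun x => ?_)
    ring
  have h2 : Integrable (fun β : ℝ => ∫ x : ℝ, ‖x ^ 3 *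
      (|x - γ| ^ (α - 1) / (2 * β ^ α * Real.Gamma α) * Real.exp (-|x - γ| / β) *
        (δ ^ ζ * β ^ (ζ - 1) / Real.Gamma ζ * Real.exp (-δ * β)))‖)
      ((volume : Measure ℝ).restrict (Set.Ioi 0)) := by
    have hB : Integrable (fun β : ℝ =>
        (4 * (Real.Gamma (α + 3) / Real.Gamma α) * β ^ 3 + 4 * |γ| ^ 3) *
          (δ ^ ζ * β ^ (ζ - 1) / Real.Gamma ζ * Real.exp (-δ * β)))
        ((volume : Measure ℝ).restrict (Set.Ioi 0)) := by
      have base1 : Integrable (fun β : ℝ =>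
          4 * (Real.Gamma (α + 3) / Real.Gamma α) * (δ ^ ζ / Real.Gamma ζ) *
            (β ^ ((ζ + 3) - 1) * Real.exp (-(δ * β))))
          ((volume : Measure ℝ).restrict (Set.Ioi 0)) :=
        (skd_aux_intOn (by linarith) hδ).const_mul _
      have base2 : Integrable (fun β : ℝ =>
          4 * |γ| ^ 3 * (δ ^ ζ / Real.Gamma ζ) * (β ^ (ζ - 1) * Real.exp (-(δ * β))))
          ((volume : Measure ℝ).restrict (Set.Ioi 0)) :=
        (skd_aux_intOn hζ hδ).const_mul _
      have baseAdd : Integrable (fun β : ℝ =>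
          4 * (Real.Gamma (α + 3) / Real.Gamma α) * (δ ^ ζ / Real.Gamma ζ) *
            (β ^ ((ζ + 3) - 1) * Real.exp (-(δ * β)))
          + 4 * |γ| ^ 3 * (δ ^ ζ / Real.Gamma ζ) * (β ^ (ζ - 1) * Real.exp (-(δ * β))))
          ((volume : Measure ℝ).restrict (Set.Ioi 0)) := base1.add base2
      refine baseAdd.congr ?_
      filter_upwards [ae_restrict_mem measurableSet_Ioi] with β hβ
      have hpow : β ^ ((ζ + 3) - 1) = β ^ (ζ - 1) * β ^ (3:ℕ) := by
        rw [show (ζ + 3) - 1 = (ζ - 1) + ((3:ℕ):ℝ) by push_cast; ring,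
          Real.rpow_add hβ, Real.rpow_natCast]
      rw [hpow, show -δ * β = -(δ * β) from neg_mul δ β]
      field_simp
    have hm2 : AEStronglyMeasurable (fun β : ℝ => ∫ x : ℝ, ‖x ^ 3 *
        (|x - γ| ^ (α - 1) / (2 * β ^ α * Real.Gamma α) * Real.exp (-|x - γ| / β) *
          (δ ^ ζ * β ^ (ζ - 1) / Real.Gamma ζ * Real.exp (-δ * β)))‖)
        ((volume : Measure ℝ).restrict (Set.Ioi 0)) := by
      have hm' : Measurable fun q : ℝ × ℝ => ‖q.2 ^ 3 *
          (|q.2 - γ| ^ (α - 1) / (2 * q.1 ^ α * Real.Gamma α) * Real.exp (-|q.2 - γ| / q.1) *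
            (δ ^ ζ * q.1 ^ (ζ - 1) / Real.Gamma ζ * Real.exp (-δ * q.1)))‖ := by fun_prop
      exact (hm'.aestronglyMeasurable
        (μ := ((volume : Measure ℝ).restrict (Set.Ioi 0)).prod volume)).integral_prod_right'
    refine hB.mono' hm2 ?_
    filter_upwards [ae_restrict_mem measurableSet_Ioi] with β hβ
    have hβ' : (0:ℝ) < β := hβ
    have hprior : 0 ≤ δ ^ ζ * β ^ (ζ - 1) / Real.Gamma ζ * Real.exp (-δ * β) :=
      mul_nonneg (div_nonneg (mul_nonneg (Real.rpow_nonneg hδ.le ζ)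
        (Real.rpow_nonneg hβ'.le (ζ - 1))) hΓζ.le) (Real.exp_pos _).le
    have hrw : (fun x : ℝ => ‖x ^ 3 *
        (|x - γ| ^ (α - 1) / (2 * β ^ α * Real.Gamma α) * Real.exp (-|x - γ| / β) *
          (δ ^ ζ * β ^ (ζ - 1) / Real.Gamma ζ * Real.exp (-δ * β)))‖)
        = fun x : ℝ => ‖x ^ 3 *
          (|x - γ| ^ (α - 1) / (2 * β ^ α * Real.Gamma α) * Real.exp (-|x - γ| / β))‖ *
            (δ ^ ζ * β ^ (ζ - 1) / Real.Gamma ζ * Real.exp (-δ * β)) := by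
      funext x
      rw [Real.norm_eq_abs, Real.norm_eq_abs, show x ^ 3 *
        (|x - γ| ^ (α - 1) / (2 * β ^ α * Real.Gamma α) * Real.exp (-|x - γ| / β) *
          (δ ^ ζ * β ^ (ζ - 1) / Real.Gamma ζ * Real.exp (-δ * β)))
        = x ^ 3 * (|x - γ| ^ (α - 1) / (2 * β ^ α * Real.Gamma α) * Real.exp (-|x - γ| / β)) *
          (δ ^ ζ * β ^ (ζ - 1) / Real.Gamma ζ * Real.exp (-δ * β)) by ring,
        abs_mul, abs_of_nonneg hprior]
    rw [hrw, integral_mul_const, Real.norm_eq_abs,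
      abs_of_nonneg (mul_nonneg (integral_nonneg fun x => norm_nonneg _) hprior)]
    exact mul_le_mul_of_nonneg_right (skd_inner_norm_le hα hβ γ) hprior
  have hF : Integrable (Function.uncurry fun (x β : ℝ) => x ^ 3 *
      (|x - γ| ^ (α - 1) / (2 * β ^ α * Real.Gamma α) * Real.exp (-|x - γ| / β) *
        (δ ^ ζ * β ^ (ζ - 1) / Real.Gamma ζ * Real.exp (-δ * β))))
      ((volume : Measure ℝ).prod ((volume : Measure ℝ).restrict (Set.Ioi 0))) :=
    (integrable_prod_iff' hmeas).2 ⟨h1, h2⟩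
  rw [step1, integral_integral_swap hF]
  have step3 : Set.EqOn (fun β : ℝ => ∫ x : ℝ, x ^ 3 *
      (|x - γ| ^ (α - 1) / (2 * β ^ α * Real.Gamma α) * Real.exp (-|x - γ| / β) *
        (δ ^ ζ * β ^ (ζ - 1) / Real.Gamma ζ * Real.exp (-δ * β))))
      (fun β : ℝ => 3 * γ * (α * (α + 1)) * (δ ^ ζ / Real.Gamma ζ) *
          (β ^ ((ζ + 2) - 1) * Real.exp (-(δ * β)))
        + γ ^ 3 * (δ ^ ζ / Real.Gamma ζ) * (β ^ (ζ - 1) * Real.exp (-(δ * β))))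
      (Set.Ioi 0) := by
    intro β hβ
    have hβ' : (0:ℝ) < β := hβ
    have e1 : (fun x : ℝ => x ^ 3 *
        (|x - γ| ^ (α - 1) / (2 * β ^ α * Real.Gamma α) * Real.exp (-|x - γ| / β) *
          (δ ^ ζ * β ^ (ζ - 1) / Real.Gamma ζ * Real.exp (-δ * β))))
        = fun x : ℝ => x ^ 3 *
          (|x - γ| ^ (α - 1) / (2 * β ^ α * Real.Gamma α) * Real.exp (-|x - γ| / β)) *
            (δ ^ ζ * β ^ (ζ - 1) / Real.Gamma ζ * Real.exp (-δ * β)) :=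
      funext fun x => by ring
    show (∫ x : ℝ, x ^ 3 *
        (|x - γ| ^ (α - 1) / (2 * β ^ α * Real.Gamma α) * Real.exp (-|x - γ| / β) *
          (δ ^ ζ * β ^ (ζ - 1) / Real.Gamma ζ * Real.exp (-δ * β))))
      = 3 * γ * (α * (α + 1)) * (δ ^ ζ / Real.Gamma ζ) *
          (β ^ ((ζ + 2) - 1) * Real.exp (-(δ * β)))
        + γ ^ 3 * (δ ^ ζ / Real.Gamma ζ) * (β ^ (ζ - 1) * Real.exp (-(δ * β)))
    rw [show (∫ x : ℝ, x ^ 3 *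
        (|x - γ| ^ (α - 1) / (2 * β ^ α * Real.Gamma α) * Real.exp (-|x - γ| / β) *
          (δ ^ ζ * β ^ (ζ - 1) / Real.Gamma ζ * Real.exp (-δ * β)))) = _ from congrArg _ e1,
      integral_mul_const, skd_inner_val hα hβ' γ]
    have hpow : β ^ ((ζ + 2) - 1) = β ^ (ζ - 1) * β ^ (2:ℕ) := by
      rw [show (ζ + 2) - 1 = (ζ - 1) + ((2:ℕ):ℝ) by push_cast; ring,
        Real.rpow_add hβ', Real.rpow_natCast]
    rw [hpow, show -δ * β = -(δ * β) from neg_mul δ β]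
    field_simp
  rw [setIntegral_congr_fun measurableSet_Ioi step3]
  have J1 : Integrable (fun β : ℝ => 3 * γ * (α * (α + 1)) * (δ ^ ζ / Real.Gamma ζ) *
      (β ^ ((ζ + 2) - 1) * Real.exp (-(δ * β)))) ((volume : Measure ℝ).restrict (Set.Ioi 0)) :=
    (skd_aux_intOn (by linarith) hδ).const_mul _
  have J2 : Integrable (fun β : ℝ => γ ^ 3 * (δ ^ ζ / Real.Gamma ζ) *
      (β ^ (ζ - 1) * Real.exp (-(δ * β)))) ((volume : Measure ℝ).restrict (Set.Ioi 0)) :=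
    (skd_aux_intOn hζ hδ).const_mul _
  rw [integral_add J1 J2, integral_const_mul, integral_const_mul,
    integral_rpow_mul_exp_neg_mul_Ioi (by linarith : (0:ℝ) < ζ + 2) hδ,
    integral_rpow_mul_exp_neg_mul_Ioi hζ hδ]
  have hΓζ2 : Real.Gamma (ζ + 2) = (ζ + 1) * ζ * Real.Gamma ζ := by
    rw [show ζ + (2:ℝ) = (ζ + 1) + 1 by ring, Real.Gamma_add_one (by positivity),
      Real.Gamma_add_one hζ.ne']
    ring
  have hdinv : ((1:ℝ) / δ) ^ (ζ + 2) = (δ ^ ζ)⁻¹ * (δ ^ (2:ℕ))⁻¹ := by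
    rw [show ζ + (2:ℝ) = ζ + ((2:ℕ):ℝ) by push_cast; ring,
      Real.rpow_add (by positivity), Real.rpow_natCast, one_div,
      Real.inv_rpow hδ.le, inv_pow]
  have hdinv2 : ((1:ℝ) / δ) ^ ζ = (δ ^ ζ)⁻¹ := by
    rw [one_div, Real.inv_rpow hδ.le]
  rw [hΓζ2, hdinv, hdinv2]
  have hδζ : (0:ℝ) < δ ^ ζ := Real.rpow_pos_of_pos hδ ζ
  field_simp
end

section
/- For all parameters α > 0, ζ > 0, δ > 0 and γ ∈ ℝ, the variance (second central moment) of the symmetric K-distribution equals σ² = ∫_{-∞}^{∞} (x - γ)² f(x) dx = α(α+1)ζ(ζ+1)/δ², where f is the SKD density and γ is its mean. -/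
open Real MeasureTheory

open Set

/-- Auxiliary weight function: the Gamma prior divided by the normalizing factor of the
reflected Gamma parental density. -/
noncomputable def skdD (α ζ δ : ℝ) (β : ℝ) : ℝ :=
  δ ^ ζ * β ^ (ζ - 1) / Real.Gamma ζ * Real.exp (-δ * β) / (2 * β ^ α * Real.Gamma α)

/-- Auxiliary constant. -/
noncomputable def skdC (α ζ δ : ℝ) : ℝ :=
  Real.Gamma (α + 2) / Real.Gamma α * (δ ^ ζ / Real.Gamma ζ)

lemma skd_integrableOn_aux {s r : ℝ} (hs : 0 < s) (hr : 0 < r) :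
    IntegrableOn (fun t : ℝ => t ^ (s - 1) * Real.exp (-(r * t))) (Set.Ioi 0) := by
  have h0 : IntegrableOn (fun x : ℝ => Real.exp (-x) * x ^ (s - 1)) (Ioi 0) :=
    Real.GammaIntegral_convergent hs
  have h1 : IntegrableOn (fun t : ℝ => Real.exp (-(r * t)) * (r * t) ^ (s - 1)) (Ioi 0) := by
    rw [integrableOn_Ioi_comp_mul_left_iff (fun x : ℝ => Real.exp (-x) * x ^ (s - 1)) 0 hr,
      mul_zero]
    exact h0
  have h2 : IntegrableOn
      (fun t : ℝ => ((r : ℝ) ^ (s - 1))⁻¹ * (Real.exp (-(r * t)) * (r * t) ^ (s - 1)))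
      (Ioi 0) := h1.const_mul ((r : ℝ) ^ (s - 1))⁻¹
  refine IntegrableOn.congr_fun h2 (fun t ht => ?_) measurableSet_Ioi
  have htpos : (0 : ℝ) < t := ht
  rw [Real.mul_rpow hr.le htpos.le]
  have hrs : (r : ℝ) ^ (s - 1) ≠ 0 := (Real.rpow_pos_of_pos hr (s - 1)).ne'
  field_simp

lemma skd_abs_integrable {s β : ℝ} (hs : 0 < s) (hβ : 0 < β) (γ : ℝ) :
    Integrable fun x : ℝ => |x - γ| ^ (s - 1) * Real.exp (-|x - γ| / β) := by
  have hr : 0 < β⁻¹ := inv_pos.mpr hβ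
  have h0 : IntegrableOn (fun t : ℝ => t ^ (s - 1) * Real.exp (-(β⁻¹ * t))) (Ioi 0) :=
    skd_integrableOn_aux hs hr
  have hIoi : IntegrableOn (fun x : ℝ => |x| ^ (s - 1) * Real.exp (-(β⁻¹ * |x|))) (Ioi 0) :=
    h0.congr_fun (fun x hx => by rw [abs_of_pos hx]) measurableSet_Ioi
  have hIic : IntegrableOn (fun x : ℝ => |x| ^ (s - 1) * Real.exp (-(β⁻¹ * |x|))) (Iic 0) := by
    rw [← Measure.map_neg_eq_self (volume : Measure ℝ)]
    have m : MeasurableEmbedding fun x : ℝ => -x := (Homeomorph.neg ℝ).measurableEmbedding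
    rw [m.integrableOn_map_iff]
    simp_rw [Function.comp_def, abs_neg, neg_preimage, neg_Iic, neg_zero]
    exact Iff.mpr integrableOn_Ici_iff_integrableOn_Ioi hIoi
  have h1 : Integrable (fun x : ℝ => |x| ^ (s - 1) * Real.exp (-(β⁻¹ * |x|))) := by
    have := hIic.union hIoi
    rwa [Iic_union_Ioi, integrableOn_univ] at this
  have h2 := h1.comp_sub_right γ
  refine h2.congr (Filter.Eventually.of_forall fun x => ?_)
  simp only [neg_div, div_eq_inv_mul, mul_neg]

lemma skd_abs_integral {s β : ℝ} (hs : 0 < s) (hβ : 0 < β) (γ : ℝ) :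
    ∫ x : ℝ, |x - γ| ^ (s - 1) * Real.exp (-|x - γ| / β) = 2 * (β ^ s * Real.Gamma s) := by
  rw [show (fun x : ℝ => |x - γ| ^ (s - 1) * Real.exp (-|x - γ| / β))
      = fun x : ℝ => (fun t : ℝ => |t| ^ (s - 1) * Real.exp (-|t| / β)) (x - γ) from rfl,
    integral_sub_right_eq_self (fun t : ℝ => |t| ^ (s - 1) * Real.exp (-|t| / β)) γ,
    show (fun x : ℝ => |x| ^ (s - 1) * Real.exp (-|x| / β))
      = fun x : ℝ => (fun t : ℝ => t ^ (s - 1) * Real.exp (-t / β)) |x| from rfl,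
    _root_.integral_comp_abs (f := fun t : ℝ => t ^ (s - 1) * Real.exp (-t / β)),
    show (fun t : ℝ => t ^ (s - 1) * Real.exp (-t / β))
      = fun t : ℝ => t ^ (s - 1) * Real.exp (-(β⁻¹ * t)) from
        funext fun t => by rw [neg_div, div_eq_inv_mul],
    integral_rpow_mul_exp_neg_mul_Ioi hs (inv_pos.mpr hβ), one_div, inv_inv]

lemma skd_alg {α ζ δ : ℝ} (hα : 0 < α) (hζ : 0 < ζ) {β : ℝ} (hβ : 0 < β) :
    2 * (β ^ (α + 2) * Real.Gamma (α + 2)) * skdD α ζ δ β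
      = skdC α ζ δ * (β ^ (ζ + 2 - 1) * Real.exp (-(δ * β))) := by
  have hΓα : Real.Gamma α ≠ 0 := (Real.Gamma_pos_of_pos hα).ne'
  have hΓζ : Real.Gamma ζ ≠ 0 := (Real.Gamma_pos_of_pos hζ).ne'
  have hβα : β ^ α ≠ 0 := (Real.rpow_pos_of_pos hβ α).ne'
  have e1 : β ^ (α + 2) * β ^ (ζ - 1) = β ^ α * β ^ (ζ + 2 - 1) := by
    rw [← Real.rpow_add hβ, ← Real.rpow_add hβ]
    congr 1
    ring
  rw [skdD, skdC, neg_mul]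
  field_simp
  linear_combination δ ^ ζ * e1

lemma skd_inner {α ζ δ : ℝ} (γ : ℝ) (hα : 0 < α) (hζ : 0 < ζ) {β : ℝ} (hβ : 0 < β) :
    ∫ x : ℝ, |x - γ| ^ (α + 2 - 1) * Real.exp (-|x - γ| / β) * skdD α ζ δ β
      = skdC α ζ δ * (β ^ (ζ + 2 - 1) * Real.exp (-(δ * β))) := by
  rw [integral_mul_const, skd_abs_integral (by linarith : (0 : ℝ) < α + 2) hβ γ,
    skd_alg hα hζ hβ]

lemma skdD_nonneg {α ζ δ : ℝ} (hα : 0 < α) (hζ : 0 < ζ) (hδ : 0 < δ) {β : ℝ} (hβ : 0 < β) :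
    0 ≤ skdD α ζ δ β := by
  rw [skdD]
  have h1 : (0 : ℝ) ≤ δ ^ ζ * β ^ (ζ - 1) :=
    mul_nonneg (Real.rpow_nonneg hδ.le ζ) (Real.rpow_nonneg hβ.le _)
  have h2 : (0 : ℝ) ≤ 2 * β ^ α * Real.Gamma α :=
    mul_nonneg (mul_nonneg (by norm_num) (Real.rpow_nonneg hβ.le α))
      (Real.Gamma_nonneg_of_nonneg hα.le)
  exact div_nonneg (mul_nonneg (div_nonneg h1 (Real.Gamma_nonneg_of_nonneg hζ.le))
    (Real.exp_pos _).le) h2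

/-- The variance (second central moment) of the symmetric K-distribution. -/
theorem skd_variance (α ζ δ γ : ℝ) (hα : 0 < α) (hζ : 0 < ζ) (hδ : 0 < δ) :
    ∫ x : ℝ, (x - γ) ^ 2 * skdDensity α ζ δ γ x
      = α * (α + 1) * ζ * (ζ + 1) / δ ^ 2 := by
  have hΓα : Real.Gamma α ≠ 0 := (Real.Gamma_pos_of_pos hα).ne'
  have hΓζ : Real.Gamma ζ ≠ 0 := (Real.Gamma_pos_of_pos hζ).ne'
  have key : ∀ x β : ℝ, (x - γ) ^ 2 *
      ((|x - γ| ^ (α - 1) / (2 * β ^ α * Real.Gamma α)) * Real.exp (-|x - γ| / β) *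
        ((δ ^ ζ * β ^ (ζ - 1) / Real.Gamma ζ) * Real.exp (-δ * β)))
      = |x - γ| ^ (α + 2 - 1) * Real.exp (-|x - γ| / β) * skdD α ζ δ β := by
    intro x β
    have habs : (x - γ) ^ 2 * |x - γ| ^ (α - 1) = |x - γ| ^ (α + 2 - 1) := by
      rcases eq_or_ne x γ with h | h
      · simp [h, Real.zero_rpow (show α + 2 - 1 ≠ 0 by intro hc; linarith)]
      · have h0 : 0 < |x - γ| := abs_pos.mpr (sub_ne_zero.mpr h)
        rw [← sq_abs (x - γ), ← Real.rpow_natCast |x - γ| 2, ← Real.rpow_add h0]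
        congr 1
        push_cast
        ring
    rw [skdD, ← habs]
    ring
  have hmeas : Measurable (Function.uncurry fun x β : ℝ =>
      |x - γ| ^ (α + 2 - 1) * Real.exp (-|x - γ| / β) * skdD α ζ δ β) := by
    unfold skdD
    fun_prop
  have hInt : Integrable (Function.uncurry fun x β : ℝ =>
      |x - γ| ^ (α + 2 - 1) * Real.exp (-|x - γ| / β) * skdD α ζ δ β)
      (volume.prod (volume.restrict (Set.Ioi 0))) := by
    rw [integrable_prod_iff' hmeas.aestronglyMeasurable]
    constructor
    · filter_upwards [self_mem_ae_restrict measurableSet_Ioi] with β hβ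
      exact (skd_abs_integrable (by linarith : (0 : ℝ) < α + 2) hβ γ).mul_const (skdD α ζ δ β)
    · refine ((skd_integrableOn_aux (show (0 : ℝ) < ζ + 2 by linarith) hδ).const_mul
        (skdC α ζ δ)).congr ?_
      filter_upwards [self_mem_ae_restrict measurableSet_Ioi] with β hβ
      have hβ0 : (0 : ℝ) < β := hβ
      have hnorm : ∀ x : ℝ,
          ‖|x - γ| ^ (α + 2 - 1) * Real.exp (-|x - γ| / β) * skdD α ζ δ β‖
          = |x - γ| ^ (α + 2 - 1) * Real.exp (-|x - γ| / β) * skdD α ζ δ β := by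
        intro x
        refine Real.norm_of_nonneg ?_
        have := skdD_nonneg (δ := δ) hα hζ hδ hβ0
        positivity
      simp only [Function.uncurry_apply_pair]
      simp_rw [hnorm]
      exact (skd_inner γ hα hζ hβ0).symm
  calc ∫ x : ℝ, (x - γ) ^ 2 * skdDensity α ζ δ γ x
      = ∫ x : ℝ, ∫ β in Set.Ioi (0 : ℝ),
          |x - γ| ^ (α + 2 - 1) * Real.exp (-|x - γ| / β) * skdD α ζ δ β := by
        refine integral_congr_ae (Filter.Eventually.of_forall fun x => ?_)
        simp only [skdDensity]
        rw [← integral_const_mul]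
        exact integral_congr_ae (Filter.Eventually.of_forall fun β => key x β)
    _ = ∫ β in Set.Ioi (0 : ℝ), ∫ x : ℝ,
          |x - γ| ^ (α + 2 - 1) * Real.exp (-|x - γ| / β) * skdD α ζ δ β :=
        integral_integral_swap hInt
    _ = ∫ β in Set.Ioi (0 : ℝ), skdC α ζ δ * (β ^ (ζ + 2 - 1) * Real.exp (-(δ * β))) := by
        refine setIntegral_congr_fun measurableSet_Ioi fun β hβ => ?_
        exact skd_inner γ hα hζ hβ
    _ = skdC α ζ δ * ((1 / δ) ^ (ζ + 2) * Real.Gamma (ζ + 2)) := by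
        rw [integral_const_mul,
          integral_rpow_mul_exp_neg_mul_Ioi (show (0 : ℝ) < ζ + 2 by linarith) hδ]
    _ = α * (α + 1) * ζ * (ζ + 1) / δ ^ 2 := by
        have hδζ : δ ^ ζ ≠ 0 := (Real.rpow_pos_of_pos hδ ζ).ne'
        have hΓα2 : Real.Gamma (α + 2) = (α + 1) * (α * Real.Gamma α) := by
          rw [show α + 2 = α + 1 + 1 by ring, Real.Gamma_add_one (by linarith),
            Real.Gamma_add_one hα.ne']
        have hΓζ2 : Real.Gamma (ζ + 2) = (ζ + 1) * (ζ * Real.Gamma ζ) := by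
          rw [show ζ + 2 = ζ + 1 + 1 by ring, Real.Gamma_add_one (by linarith),
            Real.Gamma_add_one hζ.ne']
        have hpow : (1 / δ) ^ (ζ + 2) = (δ ^ ζ * δ ^ 2)⁻¹ := by
          rw [one_div, ← Real.rpow_natCast δ 2, ← Real.rpow_add hδ, Real.inv_rpow hδ.le]
          norm_num
        rw [skdC, hΓα2, hΓζ2, hpow]
        have hδ2 : (δ : ℝ) ^ 2 ≠ 0 := pow_ne_zero 2 hδ.ne'
        field_simp
end

section
/- For all parameters α > 0, ζ > 0, δ > 0 and γ ∈ ℝ, the fourth central moment of the symmetric K-distribution equals ∫_{-∞}^{∞} (x - γ)⁴ f(x) dx = α(α+1)(α+2)(α+3)ζ(ζ+1)(ζ+2)(ζ+3)/δ⁴, where f is the SKD density and γ is its mean. -/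
open Real MeasureTheory

open Set

/-- The integrand of the fourth-moment double integral. -/
noncomputable def skdG (α ζ δ γ : ℝ) (x β : ℝ) : ℝ :=
  (x - γ)^4 * ((|x - γ| ^ (α - 1) / (2 * β ^ α * Real.Gamma α)) * Real.exp (-|x - γ| / β) *
      ((δ ^ ζ * β ^ (ζ - 1) / Real.Gamma ζ) * Real.exp (-δ * β)))

lemma aux_integrableOn_rpow_exp {a r : ℝ} (ha : 0 < a) (hr : 0 < r) :
    IntegrableOn (fun t : ℝ => t ^ (a - 1) * Real.exp (-(r * t))) (Ioi 0) := by
  have h0 : IntegrableOn (fun x : ℝ => Real.exp (-x) * x ^ (a - 1)) (Ioi 0) :=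
    Real.GammaIntegral_convergent ha
  have h1 : IntegrableOn (fun x : ℝ => Real.exp (-(r * x)) * (r * x) ^ (a - 1)) (Ioi 0) := by
    have := (integrableOn_Ioi_comp_mul_left_iff
      (fun x : ℝ => Real.exp (-x) * x ^ (a - 1)) 0 hr).mpr
    rw [mul_zero] at this
    exact this h0
  have h2 := h1.const_mul ((r : ℝ) ^ (a - 1))⁻¹
  refine IntegrableOn.congr_fun h2 (fun x hx => ?_) measurableSet_Ioi
  have hx0 : (0:ℝ) < x := hx
  rw [Real.mul_rpow hr.le hx0.le]
  field_simp [(Real.rpow_pos_of_pos hr (a-1)).ne']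

lemma aux_integrable_comp_abs {g : ℝ → ℝ} (hg : IntegrableOn g (Ioi 0)) :
    Integrable (fun x : ℝ => g |x|) := by
  have h1 : IntegrableOn (fun x : ℝ => g |x|) (Ioi 0) :=
    IntegrableOn.congr_fun hg (fun x hx => by rw [abs_of_pos hx]) measurableSet_Ioi
  have h2 : IntegrableOn (fun x : ℝ => g |x|) (Iic 0) := by
    rw [← Measure.map_neg_eq_self (volume : Measure ℝ)]
    have m : MeasurableEmbedding fun x : ℝ => -x := (Homeomorph.neg ℝ).measurableEmbedding
    rw [m.integrableOn_map_iff]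
    simp_rw [Function.comp_def, abs_neg, neg_preimage, neg_Iic, neg_zero]
    exact (integrableOn_Ici_iff_integrableOn_Ioi).mpr h1
  have := h2.union h1
  rwa [Iic_union_Ioi, integrableOn_univ] at this

lemma aux_pt (α ζ δ γ : ℝ) (hα : 0 < α) (β : ℝ) (x : ℝ) :
    skdG α ζ δ γ x β
    = ((δ ^ ζ * β ^ (ζ - 1) * Real.exp (-δ * β)) / (Real.Gamma ζ * (2 * β ^ α * Real.Gamma α))) *
      (|x - γ| ^ ((α + 4) - 1) * Real.exp (-(β⁻¹ * |x - γ|))) := by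
  unfold skdG
  have h2 : -|x - γ| / β = -(β⁻¹ * |x - γ|) := by
    rw [neg_div, div_eq_inv_mul]
  have h1 : |x - γ| ^ ((α + 4) - 1) = (x - γ)^4 * |x - γ| ^ (α - 1) := by
    rcases eq_or_ne x γ with h | h
    · simp [h, Real.zero_rpow (by linarith : α + 4 - 1 ≠ 0)]
    · have habs : 0 < |x - γ| := abs_pos.mpr (sub_ne_zero.mpr h)
      have h4 : (x - γ)^4 = |x - γ| ^ (4 : ℝ) := by
        rw [show (4:ℝ) = ((4:ℕ):ℝ) by norm_num, Real.rpow_natCast, pow_abs,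
          abs_of_nonneg (by positivity)]
      rw [h4, ← Real.rpow_add habs]
      ring_nf
  rw [h1, h2]
  ring

lemma aux_inner (α ζ δ γ : ℝ) (hα : 0 < α) (hζ : 0 < ζ) {β : ℝ} (hβ : 0 < β) :
    (∫ x : ℝ, skdG α ζ δ γ x β)
    = (Real.Gamma (α + 4) * δ ^ ζ / (Real.Gamma α * Real.Gamma ζ)) *
        (β ^ (ζ + 3) * Real.exp (-(δ * β))) := by
  simp_rw [aux_pt α ζ δ γ hα β]
  rw [MeasureTheory.integral_const_mul]
  have e1 : (∫ x : ℝ, |x - γ| ^ ((α + 4) - 1) * Real.exp (-(β⁻¹ * |x - γ|)))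
      = ∫ x : ℝ, |x| ^ ((α + 4) - 1) * Real.exp (-(β⁻¹ * |x|)) :=
    integral_sub_right_eq_self (fun y : ℝ => |y| ^ ((α + 4) - 1) * Real.exp (-(β⁻¹ * |y|))) γ
  have e2 : (∫ x : ℝ, |x| ^ ((α + 4) - 1) * Real.exp (-(β⁻¹ * |x|)))
      = 2 * ∫ x in Ioi (0:ℝ), x ^ ((α + 4) - 1) * Real.exp (-(β⁻¹ * x)) :=
    integral_comp_abs (f := fun t : ℝ => t ^ ((α + 4) - 1) * Real.exp (-(β⁻¹ * t)))
  have e3 : (∫ x in Ioi (0:ℝ), x ^ ((α + 4) - 1) * Real.exp (-(β⁻¹ * x)))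
      = (1 / β⁻¹) ^ (α + 4) * Real.Gamma (α + 4) :=
    integral_rpow_mul_exp_neg_mul_Ioi (by linarith) (inv_pos.mpr hβ)
  rw [e1, e2, e3, one_div, inv_inv]
  have hβα : (0:ℝ) < β ^ α := Real.rpow_pos_of_pos hβ α
  have hΓα : Real.Gamma α ≠ 0 := (Real.Gamma_pos_of_pos hα).ne'
  have hΓζ : Real.Gamma ζ ≠ 0 := (Real.Gamma_pos_of_pos hζ).ne'
  have hpow : β ^ (ζ - 1) * β ^ (α + 4) = β ^ (ζ + 3) * β ^ α := by
    rw [← Real.rpow_add hβ, ← Real.rpow_add hβ]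
    ring_nf
  field_simp
  linear_combination (δ ^ ζ) * hpow

lemma aux_inner_integrable (α ζ δ γ : ℝ) (hα : 0 < α) {β : ℝ} (hβ : 0 < β) :
    Integrable (fun x : ℝ => skdG α ζ δ γ x β) := by
  simp_rw [aux_pt α ζ δ γ hα β]
  refine Integrable.const_mul ?_ _
  have h := aux_integrable_comp_abs
    (aux_integrableOn_rpow_exp (by linarith : (0:ℝ) < α + 4) (inv_pos.mpr hβ))
  exact h.comp_sub_right γ

lemma aux_gamma4 {α : ℝ} (hα : 0 < α) :
    Real.Gamma (α + 4) = (α * (α + 1) * (α + 2) * (α + 3)) * Real.Gamma α := by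
  rw [show α + 4 = α + 3 + 1 by ring, Real.Gamma_add_one (by linarith),
    show α + 3 = α + 2 + 1 by ring, Real.Gamma_add_one (by linarith),
    show α + 2 = α + 1 + 1 by ring, Real.Gamma_add_one (by linarith),
    Real.Gamma_add_one (by linarith)]
  ring

lemma aux_outer (α ζ δ : ℝ) (hα : 0 < α) (hζ : 0 < ζ) (hδ : 0 < δ) :
    (∫ β in Ioi (0:ℝ), (Real.Gamma (α + 4) * δ ^ ζ / (Real.Gamma α * Real.Gamma ζ)) *
        (β ^ (ζ + 3) * Real.exp (-(δ * β))))
    = α * (α + 1) * (α + 2) * (α + 3) * ζ * (ζ + 1) * (ζ + 2) * (ζ + 3) / δ ^ 4 := by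
  rw [MeasureTheory.integral_const_mul]
  have hint : (∫ β in Ioi (0:ℝ), β ^ (ζ + 3) * Real.exp (-(δ * β)))
      = (1 / δ) ^ (ζ + 4) * Real.Gamma (ζ + 4) := by
    rw [show (ζ:ℝ) + 3 = (ζ + 4) - 1 by ring]
    exact integral_rpow_mul_exp_neg_mul_Ioi (by linarith) hδ
  rw [hint, aux_gamma4 hα, aux_gamma4 hζ]
  have hδζ : δ ^ ζ * (1 / δ) ^ (ζ + 4) = (δ ^ (4:ℕ))⁻¹ := by
    rw [one_div, ← Real.rpow_neg_one δ, ← Real.rpow_natCast δ 4, ← Real.rpow_mul hδ.le,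
      ← Real.rpow_add hδ, ← Real.rpow_neg hδ.le]
    norm_num
  have hΓα : Real.Gamma α ≠ 0 := (Real.Gamma_pos_of_pos hα).ne'
  have hΓζ : Real.Gamma ζ ≠ 0 := (Real.Gamma_pos_of_pos hζ).ne'
  calc (α * (α + 1) * (α + 2) * (α + 3)) * Real.Gamma α * δ ^ ζ /
          (Real.Gamma α * Real.Gamma ζ) *
          ((1 / δ) ^ (ζ + 4) * ((ζ * (ζ + 1) * (ζ + 2) * (ζ + 3)) * Real.Gamma ζ))
      = (α * (α + 1) * (α + 2) * (α + 3)) * (ζ * (ζ + 1) * (ζ + 2) * (ζ + 3)) *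
          (Real.Gamma α / Real.Gamma α) * (Real.Gamma ζ / Real.Gamma ζ) *
          (δ ^ ζ * (1 / δ) ^ (ζ + 4)) := by ring
    _ = α * (α + 1) * (α + 2) * (α + 3) * ζ * (ζ + 1) * (ζ + 2) * (ζ + 3) / δ ^ 4 := by
        rw [div_self hΓα, div_self hΓζ, hδζ]
        ring_nf

lemma aux_meas (α ζ δ γ : ℝ) : Measurable (Function.uncurry (skdG α ζ δ γ)) := by
  unfold skdG Function.uncurry
  fun_prop

lemma aux_nonneg (α ζ δ γ : ℝ) (hα : 0 < α) (hζ : 0 < ζ) (hδ : 0 < δ) (x : ℝ) {β : ℝ}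
    (hβ : 0 < β) : 0 ≤ skdG α ζ δ γ x β := by
  unfold skdG
  positivity

/-- The fourth central moment of the symmetric K-distribution. -/
theorem skd_fourth_central_moment (α ζ δ γ : ℝ) (hα : 0 < α) (hζ : 0 < ζ) (hδ : 0 < δ) :
    ∫ x : ℝ, (x - γ) ^ 4 * skdDensity α ζ δ γ x
      = α * (α + 1) * (α + 2) * (α + 3) * ζ * (ζ + 1) * (ζ + 2) * (ζ + 3) / δ ^ 4 := by
  have hGm := aux_meas α ζ δ γ
  have hOm : Measurable fun p : ℝ × ℝ => ENNReal.ofReal (skdG α ζ δ γ p.1 p.2) :=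
    ENNReal.measurable_ofReal.comp hGm
  have hswap :
      (∫⁻ x : ℝ, ∫⁻ β in Ioi (0:ℝ), ENNReal.ofReal (skdG α ζ δ γ x β))
        = ∫⁻ β in Ioi (0:ℝ), ∫⁻ x : ℝ, ENNReal.ofReal (skdG α ζ δ γ x β) :=
    lintegral_lintegral_swap hOm.aemeasurable
  set I : ℝ → ℝ := fun β => (Real.Gamma (α + 4) * δ ^ ζ / (Real.Gamma α * Real.Gamma ζ)) *
      (β ^ (ζ + 3) * Real.exp (-(δ * β))) with hI
  have hI_int : IntegrableOn I (Ioi 0) := by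
    have h0 : IntegrableOn (fun β : ℝ => β ^ ((ζ + 4) - 1) * Real.exp (-(δ * β))) (Ioi 0) :=
      aux_integrableOn_rpow_exp (by linarith) hδ
    have h1 := h0.const_mul (Real.Gamma (α + 4) * δ ^ ζ / (Real.Gamma α * Real.Gamma ζ))
    simp_rw [show (ζ:ℝ) + 4 - 1 = ζ + 3 by ring] at h1
    exact h1
  have hI_nonneg : 0 ≤ᵐ[volume.restrict (Ioi (0:ℝ))] I := by
    filter_upwards [ae_restrict_mem measurableSet_Ioi] with β hβ
    have hβ0 : (0:ℝ) < β := hβ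
    have : (0:ℝ) ≤ Real.Gamma (α + 4) := Real.Gamma_nonneg_of_nonneg (by linarith)
    have hg1 : (0:ℝ) ≤ Real.Gamma α := Real.Gamma_nonneg_of_nonneg hα.le
    have hg2 : (0:ℝ) ≤ Real.Gamma ζ := Real.Gamma_nonneg_of_nonneg hζ.le
    have hd : (0:ℝ) ≤ δ ^ ζ := Real.rpow_nonneg hδ.le _
    have hb : (0:ℝ) ≤ β ^ (ζ + 3) := Real.rpow_nonneg hβ0.le _
    positivity
  have hR : (∫⁻ β in Ioi (0:ℝ), ∫⁻ x : ℝ, ENNReal.ofReal (skdG α ζ δ γ x β))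
      = ENNReal.ofReal (∫ β in Ioi (0:ℝ), I β) := by
    rw [setLIntegral_congr_fun_ae measurableSet_Ioi (Filter.Eventually.of_forall
      (fun β hβ => by
        rw [← MeasureTheory.ofReal_integral_eq_lintegral_ofReal
          (aux_inner_integrable α ζ δ γ hα hβ)
          (Filter.Eventually.of_forall fun x => aux_nonneg α ζ δ γ hα hζ hδ x hβ),
          aux_inner α ζ δ γ hα hζ hβ]))]
    exact (MeasureTheory.ofReal_integral_eq_lintegral_ofReal hI_int hI_nonneg).symm
  have hH_meas : Measurable fun x : ℝ => ∫⁻ β in Ioi (0:ℝ), ENNReal.ofReal (skdG α ζ δ γ x β) :=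
    Measurable.lintegral_prod_right hOm
  have hfin : ∀ᵐ x : ℝ, (∫⁻ β in Ioi (0:ℝ), ENNReal.ofReal (skdG α ζ δ γ x β)) < ⊤ := by
    refine ae_lt_top hH_meas ?_
    rw [hswap, hR]
    exact ENNReal.ofReal_ne_top
  calc ∫ x : ℝ, (x - γ) ^ 4 * skdDensity α ζ δ γ x
      = ∫ x : ℝ, ∫ β in Ioi (0:ℝ), skdG α ζ δ γ x β := by
        refine integral_congr_ae (Filter.Eventually.of_forall fun x => ?_)
        unfold skdDensity skdG
        exact (MeasureTheory.integral_const_mul _ _).symm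
    _ = ∫ x : ℝ, (∫⁻ β in Ioi (0:ℝ), ENNReal.ofReal (skdG α ζ δ γ x β)).toReal := by
        refine integral_congr_ae (Filter.Eventually.of_forall fun x => ?_)
        refine MeasureTheory.integral_eq_lintegral_of_nonneg_ae ?_ ?_
        · filter_upwards [ae_restrict_mem measurableSet_Ioi] with β hβ
          exact aux_nonneg α ζ δ γ hα hζ hδ x hβ
        · exact (hGm.comp (measurable_prodMk_left)).aestronglyMeasurable
    _ = (∫⁻ x : ℝ, ∫⁻ β in Ioi (0:ℝ), ENNReal.ofReal (skdG α ζ δ γ x β)).toReal :=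
        integral_toReal hH_meas.aemeasurable hfin
    _ = (ENNReal.ofReal (∫ β in Ioi (0:ℝ), I β)).toReal := by rw [hswap, hR]
    _ = ∫ β in Ioi (0:ℝ), I β := by
        refine ENNReal.toReal_ofReal (setIntegral_nonneg measurableSet_Ioi fun β hβ => ?_)
        have hβ0 : (0:ℝ) < β := hβ
        have : (0:ℝ) ≤ Real.Gamma (α + 4) := Real.Gamma_nonneg_of_nonneg (by linarith)
        have hg1 : (0:ℝ) ≤ Real.Gamma α := Real.Gamma_nonneg_of_nonneg hα.le
        have hg2 : (0:ℝ) ≤ Real.Gamma ζ := Real.Gamma_nonneg_of_nonneg hζ.le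
        have hd : (0:ℝ) ≤ δ ^ ζ := Real.rpow_nonneg hδ.le _
        have hb : (0:ℝ) ≤ β ^ (ζ + 3) := Real.rpow_nonneg hβ0.le _
        simp only [hI]
        positivity
    _ = α * (α + 1) * (α + 2) * (α + 3) * ζ * (ζ + 1) * (ζ + 2) * (ζ + 3) / δ ^ 4 :=
        aux_outer α ζ δ hα hζ hδ
end
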